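/- arXiv:1410.5856 — 7 statements merged into one kernel-verified Lean document; each statement's English description precedes it below -/
import Mathlib

section
/- Fix n ≥ 2 and 2 ≤ l ≤ n. Let F_l : Matrix (Fin n) (Fin n) ℝ → ℝ be the map sending A to the coefficient of t^l in det(I + tA). Let A = diag(λ_1, …, λ_n) be a diagonal matrix. Then the second Fréchet derivative of F_l at A, viewed as a bilinear form evaluated on matrix units, satisfies: D²F_l(A)(E_{ij}, E_{kl}) = σ_{l−2}(λ with the i-th and k-th entries deleted) if i = j, k = l and i ≠ k; D²F_l(A)(E_{ij}, E_{kl}) = −σ_{l−2}(λ with the i-th and j-th entries deleted) if i = l, j = k and i ≠ j; and D²F_l(A)(E_{ij}, E_{kl}) = 0 in all other cases. -/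
/-- The `k`-th elementary symmetric polynomial of the entries of `lam` indexed by `s`. -/
noncomputable def esymmOn {n : ℕ} (s : Finset (Fin n)) (k : ℕ) (lam : Fin n → ℝ) : ℝ :=
  ∑ t ∈ s.powersetCard k, ∏ i ∈ t, lam i

/-- `F_l(A)` : the coefficient of `t^l` in `det (I + t A)`. -/
noncomputable def detCoeff (n l : ℕ) (A : Matrix (Fin n) (Fin n) ℝ) : ℝ :=
  (Matrix.det ((1 : Matrix (Fin n) (Fin n) (Polynomial ℝ)) +
    A.map fun a => Polynomial.C a * Polynomial.X)).coeff l

attribute [local instance] Matrix.normedAddCommGroup Matrix.normedSpace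

open Finset Polynomial

noncomputable def pcoef {n : ℕ} (σ : Equiv.Perm (Fin n)) (T : Finset (Fin n)) : ℝ :=
  ((Equiv.Perm.sign σ : ℤ) : ℝ) * ∏ i ∈ Finset.univ \ T, (if σ i = i then (1:ℝ) else 0)


lemma coeff_prod_linear {ι : Type*} [DecidableEq ι] (s : Finset ι) (b a : ι → ℝ) (k : ℕ) :
    (∏ i ∈ s, (Polynomial.C (b i) + Polynomial.C (a i) * Polynomial.X)).coeff k
      = ∑ T ∈ s.powersetCard k, (∏ i ∈ T, a i) * ∏ i ∈ s \ T, b i := by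
  induction s using Finset.induction generalizing k with
  | empty =>
    cases k with
    | zero => simp
    | succ k =>
      rw [Finset.prod_empty, Polynomial.coeff_one]
      rw [Finset.powersetCard_eq_empty.mpr (by simp)]
      simp
  | insert x s hx ih =>
    rw [Finset.prod_insert hx, add_mul, Polynomial.coeff_add, Polynomial.coeff_C_mul,
      mul_assoc, Polynomial.coeff_C_mul]
    cases k with
    | zero =>
      rw [Polynomial.mul_coeff_zero]
      simp only [Polynomial.coeff_X_zero, zero_mul, mul_zero, add_zero]
      rw [ih 0]
      simp [Finset.powersetCard_zero, Finset.prod_insert hx, mul_comm, mul_left_comm]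
    | succ k =>
      rw [Polynomial.coeff_X_mul, ih, ih]
      rw [Finset.powersetCard_succ_insert hx, Finset.sum_union, Finset.sum_image]
      · have h1 : ∀ T ∈ s.powersetCard (k+1), (∏ i ∈ T, a i) * ∏ i ∈ insert x s \ T, b i
            = b x * ((∏ i ∈ T, a i) * ∏ i ∈ s \ T, b i) := by
          intro T hT
          rw [Finset.mem_powersetCard] at hT
          have hxT : x ∉ T := fun h => hx (hT.1 h)
          have hxsT : x ∉ s \ T := fun h => hx (Finset.mem_sdiff.mp h).1
          rw [Finset.insert_sdiff_of_notMem _ hxT, Finset.prod_insert hxsT]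
          ring
        have h2 : ∀ T ∈ s.powersetCard k, (∏ i ∈ insert x T, a i) * ∏ i ∈ insert x s \ insert x T, b i
            = a x * ((∏ i ∈ T, a i) * ∏ i ∈ s \ T, b i) := by
          intro T hT
          rw [Finset.mem_powersetCard] at hT
          have hxT : x ∉ T := fun h => hx (hT.1 h)
          have hss : s \ insert x T = s \ T := by
            ext y; simp only [Finset.mem_sdiff, Finset.mem_insert]
            constructor
            · rintro ⟨hy, hy2⟩; exact ⟨hy, fun h => hy2 (Or.inr h)⟩
            · rintro ⟨hy, hy2⟩; exact ⟨hy, fun h => h.elim (fun e => hx (e ▸ hy)) hy2⟩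
          rw [Finset.insert_sdiff_insert, hss, Finset.prod_insert hxT]
          ring
        rw [Finset.sum_congr rfl h1, Finset.sum_congr rfl h2, ← Finset.mul_sum, ← Finset.mul_sum]
      · intro T hT U hU hTU
        rw [Finset.mem_coe, Finset.mem_powersetCard] at hT hU
        have : ∀ V : Finset ι, V ⊆ s → (insert x V).erase x = V := fun V hV =>
          Finset.erase_insert (fun h => hx (hV h))
        rw [← this T hT.1, ← this U hU.1, hTU]
      · rw [Finset.disjoint_left]
        intro T hT hT'
        rw [Finset.mem_powersetCard] at hT
        rw [Finset.mem_image] at hT'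
        obtain ⟨U, _, rfl⟩ := hT'
        exact hx (hT.1 (Finset.mem_insert_self x U))

lemma detCoeff_eq (n l : ℕ) (A : Matrix (Fin n) (Fin n) ℝ) :
    detCoeff n l A = ∑ σ : Equiv.Perm (Fin n),
      ∑ T ∈ (Finset.univ : Finset (Fin n)).powersetCard l,
      pcoef σ T * ∏ i ∈ T, A (σ i) i := by
  unfold detCoeff
  rw [Matrix.det_apply, Polynomial.finset_sum_coeff]
  apply Finset.sum_congr rfl
  intro σ _
  have he : ∀ i, (((1 : Matrix (Fin n) (Fin n) ℝ[X]) + A.map fun a => C a * X) : Matrix (Fin n) (Fin n) ℝ[X]) (σ i) i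
      = C (if σ i = i then (1:ℝ) else 0) + C (A (σ i) i) * X := by
    intro i
    simp [Matrix.add_apply, Matrix.map_apply, Matrix.one_apply, apply_ite Polynomial.C]
  rw [Units.smul_def, Polynomial.coeff_smul]
  rw [Finset.prod_congr rfl (fun i _ => he i), coeff_prod_linear, Finset.smul_sum]
  apply Finset.sum_congr rfl
  intro T _
  rw [zsmul_eq_mul]
  unfold pcoef
  push_cast
  ring

noncomputable def entryCLM (n : ℕ) (a b : Fin n) : Matrix (Fin n) (Fin n) ℝ →L[ℝ] ℝ :=
  LinearMap.toContinuousLinearMap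
    { toFun := fun A => A a b, map_add' := fun _ _ => rfl, map_smul' := fun _ _ => rfl }

@[simp] lemma entryCLM_apply {n : ℕ} (a b : Fin n) (A : Matrix (Fin n) (Fin n) ℝ) :
    entryCLM n a b A = A a b := rfl

lemma hasFDerivAt_prodEntries {n : ℕ} (r : Fin n → Fin n) (T : Finset (Fin n))
    (x : Matrix (Fin n) (Fin n) ℝ) :
    HasFDerivAt (fun y : Matrix (Fin n) (Fin n) ℝ => ∏ i ∈ T, y (r i) i)
      (∑ j ∈ T, (∏ i ∈ T.erase j, x (r i) i) • entryCLM n (r j) j) x :=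
  HasFDerivAt.finset_prod (fun i _ => (entryCLM n (r i) i).hasFDerivAt)

noncomputable def D1 (n l : ℕ) (x : Matrix (Fin n) (Fin n) ℝ) :
    Matrix (Fin n) (Fin n) ℝ →L[ℝ] ℝ :=
  ∑ σ : Equiv.Perm (Fin n), ∑ T ∈ (Finset.univ : Finset (Fin n)).powersetCard l,
    pcoef σ T • ∑ j ∈ T, (∏ i ∈ T.erase j, x (σ i) i) • entryCLM n (σ j) j

lemma hasFDerivAt_detCoeff (n l : ℕ) (x : Matrix (Fin n) (Fin n) ℝ) :
    HasFDerivAt (detCoeff n l) (D1 n l x) x := by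
  rw [show detCoeff n l = _ from funext (detCoeff_eq n l)]
  apply HasFDerivAt.fun_sum
  intro σ _
  apply HasFDerivAt.fun_sum
  intro T _
  exact (hasFDerivAt_prodEntries σ T x).const_mul (pcoef σ T)

lemma D1_apply (n l : ℕ) (x : Matrix (Fin n) (Fin n) ℝ) (C0 : Matrix (Fin n) (Fin n) ℝ) :
    D1 n l x C0 = ∑ σ : Equiv.Perm (Fin n),
      ∑ T ∈ (Finset.univ : Finset (Fin n)).powersetCard l,
      pcoef σ T * ∑ j ∈ T, (∏ i ∈ T.erase j, x (σ i) i) * C0 (σ j) j := by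
  simp [D1, ContinuousLinearMap.sum_apply, Finset.mul_sum]

noncomputable def D2 (n l : ℕ) (C0 : Matrix (Fin n) (Fin n) ℝ) (x : Matrix (Fin n) (Fin n) ℝ) :
    Matrix (Fin n) (Fin n) ℝ →L[ℝ] ℝ :=
  ∑ σ : Equiv.Perm (Fin n), ∑ T ∈ (Finset.univ : Finset (Fin n)).powersetCard l,
    pcoef σ T • ∑ j ∈ T, C0 (σ j) j •
      ∑ j' ∈ T.erase j, (∏ i ∈ (T.erase j).erase j', x (σ i) i) • entryCLM n (σ j') j'

lemma hasFDerivAt_g (n l : ℕ) (C0 x : Matrix (Fin n) (Fin n) ℝ) :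
    HasFDerivAt (fun y => D1 n l y C0) (D2 n l C0 x) x := by
  rw [show (fun y => D1 n l y C0) = _ from funext (fun y => D1_apply n l y C0)]
  apply HasFDerivAt.fun_sum
  intro σ _
  apply HasFDerivAt.fun_sum
  intro T _
  apply HasFDerivAt.const_mul
  apply HasFDerivAt.fun_sum
  intro j _
  exact (hasFDerivAt_prodEntries σ (T.erase j) x).mul_const (C0 (σ j) j)

lemma differentiableAt_D1 (n l : ℕ) (x : Matrix (Fin n) (Fin n) ℝ) :
    DifferentiableAt ℝ (D1 n l) x := by
  have hcd : ContDiff ℝ 2 (detCoeff n l) := by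
    rw [show detCoeff n l = _ from funext (detCoeff_eq n l)]
    apply ContDiff.sum
    intro σ _
    apply ContDiff.sum
    intro T _
    apply ContDiff.mul contDiff_const
    apply contDiff_prod
    intro i _
    exact (entryCLM n (σ i) i).contDiff
  have h1 : fderiv ℝ (detCoeff n l) = D1 n l :=
    funext fun x => (hasFDerivAt_detCoeff n l x).fderiv
  have h2 := (hcd.fderiv_right (m := 1) (by norm_num)).differentiable (by norm_num) x
  exact h1 ▸ h2

lemma fderiv2_eq (n l : ℕ) (Dm B C0 : Matrix (Fin n) (Fin n) ℝ) :
    fderiv ℝ (fderiv ℝ (detCoeff n l)) Dm B C0 = D2 n l C0 Dm B := by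
  have h1 : fderiv ℝ (detCoeff n l) = D1 n l :=
    funext fun x => (hasFDerivAt_detCoeff n l x).fderiv
  have hdiff : DifferentiableAt ℝ (D1 n l) Dm := differentiableAt_D1 n l Dm
  have h3 : fderiv ℝ (fun x => D1 n l x C0) Dm = D2 n l C0 Dm :=
    (hasFDerivAt_g n l C0 Dm).fderiv
  have h2 : fderiv ℝ (fun x => D1 n l x C0) Dm =
      (ContinuousLinearMap.apply ℝ ℝ C0).comp (fderiv ℝ (D1 n l) Dm) :=
    (((ContinuousLinearMap.apply ℝ ℝ C0).hasFDerivAt).comp Dm hdiff.hasFDerivAt).fderiv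
  rw [h1]
  have := h3 ▸ h2
  calc fderiv ℝ (D1 n l) Dm B C0
      = ((ContinuousLinearMap.apply ℝ ℝ C0).comp (fderiv ℝ (D1 n l) Dm)) B := rfl
    _ = D2 n l C0 Dm B := by rw [← this]

-- collapsed inner term
noncomputable def Gv {n : ℕ} (lam : Fin n → ℝ) (k m p q : Fin n) (σ : Equiv.Perm (Fin n))
    (T : Finset (Fin n)) : ℝ :=
  if m ∈ T then
    (if k = σ m then 1 else 0) *
      (if q ∈ T.erase m then
        (if p = σ q then 1 else 0) * ∏ i ∈ (T.erase m).erase q, Matrix.diagonal lam (σ i) i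
      else 0)
  else 0

lemma inner_collapse {n : ℕ} (lam : Fin n → ℝ) (k m p q : Fin n) (σ : Equiv.Perm (Fin n))
    (T : Finset (Fin n)) :
    (∑ j ∈ T, Matrix.single k m (1:ℝ) (σ j) j *
      ∑ j' ∈ T.erase j, (∏ i ∈ (T.erase j).erase j', Matrix.diagonal lam (σ i) i) *
        Matrix.single p q (1:ℝ) (σ j') j') = Gv lam k m p q σ T := by
  have e1 : ∀ j ∈ T, Matrix.single k m (1:ℝ) (σ j) j *
      (∑ j' ∈ T.erase j, (∏ i ∈ (T.erase j).erase j', Matrix.diagonal lam (σ i) i) *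
        Matrix.single p q (1:ℝ) (σ j') j')
      = if m = j then (if k = σ j then 1 else 0) *
          (∑ j' ∈ T.erase j, (∏ i ∈ (T.erase j).erase j', Matrix.diagonal lam (σ i) i) *
            Matrix.single p q (1:ℝ) (σ j') j') else 0 := by
    intro j _
    have : Matrix.single k m (1:ℝ) (σ j) j
        = if k = σ j ∧ m = j then 1 else 0 := rfl
    rw [this]
    by_cases h1 : m = j <;> by_cases h2 : k = σ j <;> simp [h1, h2]
  rw [Finset.sum_congr rfl e1, Finset.sum_ite_eq, Gv]
  by_cases hm : m ∈ T
  · simp only [hm, if_true]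
    congr 1
    have e2 : ∀ j' ∈ T.erase m, (∏ i ∈ (T.erase m).erase j', Matrix.diagonal lam (σ i) i) *
        Matrix.single p q (1:ℝ) (σ j') j'
        = if q = j' then (if p = σ j' then 1 else 0) *
            ∏ i ∈ (T.erase m).erase j', Matrix.diagonal lam (σ i) i else 0 := by
      intro j' _
      have : Matrix.single p q (1:ℝ) (σ j') j'
          = if p = σ j' ∧ q = j' then 1 else 0 := rfl
      rw [this]
      by_cases h1 : q = j' <;> by_cases h2 : p = σ j' <;> simp [h1, h2, mul_comm]
    rw [Finset.sum_congr rfl e2, Finset.sum_ite_eq]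
  · simp [hm]

lemma term_eq_zero_of_ne {n : ℕ} (lam : Fin n → ℝ) (k m p q : Fin n)
    (σ0 σ : Equiv.Perm (Fin n)) (hm0 : σ0 m = k) (hq0 : σ0 q = p)
    (hfix0 : ∀ i, i ≠ m → i ≠ q → σ0 i = i) (hne : σ ≠ σ0) (T : Finset (Fin n)) :
    pcoef σ T * Gv lam k m p q σ T = 0 := by
  by_cases hmT : m ∈ T
  swap
  · simp [Gv, hmT]
  by_cases hqT : q ∈ T.erase m
  swap
  · simp [Gv, hmT, hqT]
  by_cases hk : k = σ m
  swap
  · simp [Gv, hmT, hqT, hk]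
  by_cases hp : p = σ q
  swap
  · simp [Gv, hmT, hqT, hk, hp]
  by_cases hfix2 : ∀ i ∈ (T.erase m).erase q, σ i = i
  swap
  · push_neg at hfix2
    obtain ⟨i0, hi0, hσi0⟩ := hfix2
    have : (∏ i ∈ (T.erase m).erase q, Matrix.diagonal lam (σ i) i) = 0 :=
      Finset.prod_eq_zero hi0 (by simp [Matrix.diagonal_apply, hσi0])
    simp [Gv, hmT, hqT, hk, hp, this]
  by_cases hfix1 : ∀ i ∈ Finset.univ \ T, σ i = i
  swap
  · push_neg at hfix1
    obtain ⟨i0, hi0, hσi0⟩ := hfix1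
    have : pcoef σ T = 0 := by
      unfold pcoef
      rw [Finset.prod_eq_zero hi0 (by simp [hσi0])]
      ring
    simp [this]
  exfalso
  apply hne
  ext i
  by_cases him : i = m
  · rw [him, ← hk, hm0]
  by_cases hiq : i = q
  · rw [hiq, ← hp, hq0]
  rw [hfix0 i him hiq]
  by_cases hiT : i ∈ T
  · exact congrArg Fin.val (hfix2 i (Finset.mem_erase.mpr ⟨hiq, Finset.mem_erase.mpr ⟨him, hiT⟩⟩))
  · exact congrArg Fin.val (hfix1 i (Finset.mem_sdiff.mpr ⟨Finset.mem_univ i, hiT⟩))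

lemma term_at {n : ℕ} (lam : Fin n → ℝ) (k m p q : Fin n) (σ0 : Equiv.Perm (Fin n))
    (hm0 : σ0 m = k) (hq0 : σ0 q = p) (hfix0 : ∀ i, i ≠ m → i ≠ q → σ0 i = i)
    (T : Finset (Fin n)) :
    pcoef σ0 T * Gv lam k m p q σ0 T =
      if m ∈ T ∧ q ∈ T.erase m then
        ((Equiv.Perm.sign σ0 : ℤ) : ℝ) * ∏ i ∈ (T.erase m).erase q, lam i
      else 0 := by
  by_cases hmT : m ∈ T
  swap
  · simp [Gv, hmT]
  by_cases hqT : q ∈ T.erase m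
  swap
  · simp [Gv, hmT, hqT]
  simp only [hmT, hqT, and_self, if_true, true_and, Gv, ← hm0, ← hq0, if_pos rfl]
  have h1 : pcoef σ0 T = ((Equiv.Perm.sign σ0 : ℤ) : ℝ) := by
    unfold pcoef
    rw [Finset.prod_eq_one, mul_one]
    intro i hi
    have hiT : i ∉ T := (Finset.mem_sdiff.mp hi).2
    rw [hfix0 i (fun h => hiT (h ▸ hmT)) (fun h => hiT (h ▸ (Finset.mem_erase.mp hqT).2))]
    simp
  have h2 : ∏ i ∈ (T.erase m).erase q, Matrix.diagonal lam (σ0 i) i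
      = ∏ i ∈ (T.erase m).erase q, lam i := by
    apply Finset.prod_congr rfl
    intro i hi
    have hi' := Finset.mem_erase.mp hi
    have hi'' := Finset.mem_erase.mp hi'.2
    rw [hfix0 i hi''.1 hi'.1, Matrix.diagonal_apply_eq]
  rw [h1, h2]
  ring

lemma term_zero_all {n : ℕ} (lam : Fin n → ℝ) (k m p q : Fin n)
    (hnc1 : ¬(p = q ∧ k = m ∧ p ≠ k)) (hnc2 : ¬(p = m ∧ q = k ∧ p ≠ q))
    (σ : Equiv.Perm (Fin n)) (T : Finset (Fin n)) :
    pcoef σ T * Gv lam k m p q σ T = 0 := by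
  by_cases hmT : m ∈ T
  swap
  · simp [Gv, hmT]
  by_cases hqT : q ∈ T.erase m
  swap
  · simp [Gv, hmT, hqT]
  by_cases hk : k = σ m
  swap
  · simp [Gv, hmT, hqT, hk]
  by_cases hp : p = σ q
  swap
  · simp [Gv, hmT, hqT, hk, hp]
  by_cases hfix2 : ∀ i ∈ (T.erase m).erase q, σ i = i
  swap
  · push_neg at hfix2
    obtain ⟨i0, hi0, hσi0⟩ := hfix2
    have : (∏ i ∈ (T.erase m).erase q, Matrix.diagonal lam (σ i) i) = 0 :=
      Finset.prod_eq_zero hi0 (by simp [Matrix.diagonal_apply, hσi0])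
    simp [Gv, hmT, hqT, hk, hp, this]
  by_cases hfix1 : ∀ i ∈ Finset.univ \ T, σ i = i
  swap
  · push_neg at hfix1
    obtain ⟨i0, hi0, hσi0⟩ := hfix1
    have : pcoef σ T = 0 := by
      unfold pcoef
      rw [Finset.prod_eq_zero hi0 (by simp [hσi0])]
      ring
    simp [this]
  exfalso
  have hqm : q ≠ m := (Finset.mem_erase.mp hqT).1
  have hqT' : q ∈ T := (Finset.mem_erase.mp hqT).2
  have hfix : ∀ i, i ≠ m → i ≠ q → σ i = i := by
    intro i him hiq
    by_cases hiT : i ∈ T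
    · exact hfix2 i (Finset.mem_erase.mpr ⟨hiq, Finset.mem_erase.mpr ⟨him, hiT⟩⟩)
    · exact hfix1 i (Finset.mem_sdiff.mpr ⟨Finset.mem_univ i, hiT⟩)
  have hσm : σ m = k := hk.symm
  have hσq : σ q = p := hp.symm
  by_cases hkm : k = m
  · by_cases hpq : p = q
    · refine hnc1 ⟨hpq, hkm, fun hpk => hqm (σ.injective ?_)⟩
      rw [hσq, hσm]; exact hpk
    · by_cases hpm : p = m
      · refine hqm (σ.injective ?_)
        rw [hσq, hσm]; exact hpm.trans hkm.symm
      · exact hpq ((σ.injective (by rw [hσq, hfix p hpm hpq]) : q = p)).symm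
  · have hkq : k = q := by
      by_contra hkq
      exact hkm (σ.injective (by rw [hσm, hfix k hkm hkq]) : m = k).symm
    by_cases hpm : p = m
    · exact hnc2 ⟨hpm, hkq.symm, fun hpq => hqm (hpm ▸ hpq).symm⟩
    · by_cases hpq : p = q
      · apply hqm
        apply σ.injective
        rw [hσq, hσm, hkq, hpq]
      · exact hpq ((σ.injective (by rw [hσq, hfix p hpm hpq]) : q = p)).symm

lemma T_sum {n : ℕ} (l : ℕ) (hl : 2 ≤ l) (lam : Fin n → ℝ) (m q : Fin n) (hqm : q ≠ m) :
    ∑ T ∈ (Finset.univ : Finset (Fin n)).powersetCard l,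
      (if m ∈ T ∧ q ∈ T.erase m then ∏ i ∈ (T.erase m).erase q, lam i else 0)
    = esymmOn ((Finset.univ.erase m).erase q) (l - 2) lam := by
  rw [← Finset.sum_filter]
  unfold esymmOn
  apply Finset.sum_nbij' (fun T => (T.erase m).erase q) (fun S => insert m (insert q S))
  · intro T hT
    rw [Finset.mem_filter, Finset.mem_powersetCard] at hT
    obtain ⟨⟨_, hcard⟩, hmT, hqT⟩ := hT
    rw [Finset.mem_powersetCard]
    constructor
    · intro i hi
      have hi' := Finset.mem_erase.mp hi
      have hi'' := Finset.mem_erase.mp hi'.2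
      exact Finset.mem_erase.mpr ⟨hi'.1, Finset.mem_erase.mpr ⟨hi''.1, Finset.mem_univ i⟩⟩
    · rw [Finset.card_erase_of_mem hqT, Finset.card_erase_of_mem hmT, hcard]
      omega
  · intro S hS
    rw [Finset.mem_powersetCard] at hS
    obtain ⟨hsub, hcard⟩ := hS
    have hqS : q ∉ S := fun h => (Finset.mem_erase.mp (hsub h)).1 rfl
    have hmS : m ∉ S := fun h => (Finset.mem_erase.mp (Finset.mem_erase.mp (hsub h)).2).1 rfl
    have hmqS : m ∉ insert q S := by
      simp only [Finset.mem_insert]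
      rintro (h | h)
      exacts [hqm h.symm, hmS h]
    rw [Finset.mem_filter, Finset.mem_powersetCard]
    refine ⟨⟨Finset.subset_univ _, ?_⟩, Finset.mem_insert_self _ _, ?_⟩
    · rw [Finset.card_insert_of_notMem hmqS, Finset.card_insert_of_notMem hqS, hcard]
      omega
    · exact Finset.mem_erase.mpr ⟨hqm, Finset.mem_insert_of_mem (Finset.mem_insert_self _ _)⟩
  · intro T hT
    rw [Finset.mem_filter] at hT
    obtain ⟨_, hmT, hqT⟩ := hT
    rw [Finset.insert_erase hqT, Finset.insert_erase hmT]
  · intro S hS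
    rw [Finset.mem_powersetCard] at hS
    obtain ⟨hsub, _⟩ := hS
    have hqS : q ∉ S := fun h => (Finset.mem_erase.mp (hsub h)).1 rfl
    have hmS : m ∉ S := fun h => (Finset.mem_erase.mp (Finset.mem_erase.mp (hsub h)).2).1 rfl
    have hmqS : m ∉ insert q S := by
      simp only [Finset.mem_insert]
      rintro (h | h)
      exacts [hqm h.symm, hmS h]
    rw [Finset.erase_insert hmqS, Finset.erase_insert hqS]
  · intro T _
    rfl


lemma D2_apply (n l : ℕ) (C0 x B : Matrix (Fin n) (Fin n) ℝ) :
    D2 n l C0 x B = ∑ σ : Equiv.Perm (Fin n),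
      ∑ T ∈ (Finset.univ : Finset (Fin n)).powersetCard l,
      pcoef σ T * ∑ j ∈ T, C0 (σ j) j *
        ∑ j' ∈ T.erase j, (∏ i ∈ (T.erase j).erase j', x (σ i) i) * B (σ j') j' := by
  simp [D2, ContinuousLinearMap.sum_apply, Finset.mul_sum, mul_assoc]

/-- The second Fréchet derivative of `F_l` at a diagonal matrix `diag(λ)`, viewed as a
bilinear form and evaluated on matrix units `E_{ij}`, `E_{km}`:
it equals `σ_{l-2}(λ with the i-th and k-th entries deleted)` if `i = j`, `k = m`, `i ≠ k`;
it equals `-σ_{l-2}(λ with the i-th and j-th entries deleted)` if `i = m`, `j = k`, `i ≠ j`;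
and it equals `0` in all other cases. -/
theorem fderiv2_detCoeff_diagonal (n l : ℕ) (hn : 2 ≤ n) (hl : 2 ≤ l) (hln : l ≤ n)
    (lam : Fin n → ℝ) (i j k m : Fin n) :
    fderiv ℝ (fderiv ℝ (detCoeff n l)) (Matrix.diagonal lam)
        (Matrix.single i j 1) (Matrix.single k m 1) =
      if i = j ∧ k = m ∧ i ≠ k then
        esymmOn ((Finset.univ.erase i).erase k) (l - 2) lam
      else if i = m ∧ j = k ∧ i ≠ j then
        -esymmOn ((Finset.univ.erase i).erase j) (l - 2) lam
      else 0 := by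
  rw [fderiv2_eq, D2_apply]
  have hcol : ∀ σ : Equiv.Perm (Fin n),
      ∀ T ∈ (Finset.univ : Finset (Fin n)).powersetCard l,
      pcoef σ T * ∑ j' ∈ T, Matrix.single k m (1:ℝ) (σ j') j' *
        ∑ j'' ∈ T.erase j', (∏ i' ∈ (T.erase j').erase j'', Matrix.diagonal lam (σ i') i') *
          Matrix.single i j (1:ℝ) (σ j'') j''
      = pcoef σ T * Gv lam k m i j σ T := fun σ T _ => by
    rw [inner_collapse]
  rw [Finset.sum_congr rfl (fun σ _ => Finset.sum_congr rfl (hcol σ)), Finset.sum_comm]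
  have hstep : ∀ σ0 : Equiv.Perm (Fin n), σ0 m = k → σ0 j = i →
      (∀ x, x ≠ m → x ≠ j → σ0 x = x) → j ≠ m →
      (∑ T ∈ (Finset.univ : Finset (Fin n)).powersetCard l, ∑ σ : Equiv.Perm (Fin n),
        pcoef σ T * Gv lam k m i j σ T)
      = ((Equiv.Perm.sign σ0 : ℤ) : ℝ) * esymmOn ((Finset.univ.erase m).erase j) (l - 2) lam := by
    intro σ0 hm0 hq0 hfix0 hqm
    have h1 : ∀ T ∈ (Finset.univ : Finset (Fin n)).powersetCard l,
        (∑ σ : Equiv.Perm (Fin n), pcoef σ T * Gv lam k m i j σ T)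
        = ((Equiv.Perm.sign σ0 : ℤ) : ℝ) *
            (if m ∈ T ∧ j ∈ T.erase m then ∏ i' ∈ (T.erase m).erase j, lam i' else 0) := by
      intro T _
      rw [Finset.sum_eq_single σ0
        (fun σ _ hne => term_eq_zero_of_ne lam k m i j σ0 σ hm0 hq0 hfix0 hne T)
        (fun h => absurd (Finset.mem_univ σ0) h),
        term_at lam k m i j σ0 hm0 hq0 hfix0 T]
      split_ifs <;> ring
    rw [Finset.sum_congr rfl h1, ← Finset.mul_sum, T_sum l hl lam m j hqm]
  by_cases hc1 : i = j ∧ k = m ∧ i ≠ k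
  · rw [if_pos hc1]
    obtain ⟨h1, h2, h3⟩ := hc1
    have hqm : j ≠ m := fun h => h3 (h1.trans (h.trans h2.symm))
    rw [hstep 1 (by simp [h2.symm]) (by simp [h1.symm]) (fun _ _ _ => rfl) hqm]
    simp only [Equiv.Perm.sign_one, Units.val_one, Int.cast_one, one_mul]
    rw [← h1, ← h2, Finset.erase_right_comm]
  · rw [if_neg hc1]
    by_cases hc2 : i = m ∧ j = k ∧ i ≠ j
    · rw [if_pos hc2]
      obtain ⟨h1, h2, h3⟩ := hc2
      have hmj : m ≠ j := fun h => h3 (h1.trans h)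
      rw [hstep (Equiv.swap m j)
        (by rw [Equiv.swap_apply_left, ← h2])
        (by rw [Equiv.swap_apply_right, ← h1])
        (fun x hx1 hx2 => Equiv.swap_apply_of_ne_of_ne hx1 hx2)
        hmj.symm]
      rw [Equiv.Perm.sign_swap hmj]
      rw [← h1]
      push_cast
      ring
    · rw [if_neg hc2]
      apply Finset.sum_eq_zero
      intro T _
      apply Finset.sum_eq_zero
      intro σ _
      exact term_zero_all lam k m i j hc1 hc2 σ T
end

section
/- Let n ≥ 2, let λ ∈ ℝ^n lie in the Gårding cone Γ₂ (σ₁(λ) > 0 and σ₂(λ) > 0), and let v ∈ ℝ^n be arbitrary. Then 2 σ₂(λ) · Σ_{i≠j} v_i v_j ≤ (Σ_i (σ₁(λ) − λ_i) v_i)². Equivalently, −Σ_{i≠j} v_i v_j ≥ −(Σ_i σ₂^{ii}(λ) v_i)² / (2σ₂(λ)) where σ₂^{ii}(λ) = σ₁(λ) − λ_i. -/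
/-- The `k`-th elementary symmetric polynomial of `λ_1, …, λ_n`. -/
noncomputable def esymm (n k : ℕ) (lam : Fin n → ℝ) : ℝ :=
  ∑ s ∈ Finset.univ.powersetCard k, ∏ i ∈ s, lam i

lemma esymm_two_aux {ι : Type*} [DecidableEq ι] (s : Finset ι) (f : ι → ℝ) :
    2 * ∑ t ∈ s.powersetCard 2, ∏ i ∈ t, f i =
      (∑ i ∈ s, f i) ^ 2 - ∑ i ∈ s, (f i) ^ 2 := by
  induction s using Finset.induction_on with
  | empty =>
    rw [Finset.powersetCard_eq_empty.mpr (by simp)]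
    simp
  | @insert x s hx ih =>
    rw [Finset.powersetCard_succ_insert hx, Finset.sum_union, Finset.sum_image]
    · have hins : ∀ t ∈ s.powersetCard 1, ∏ i ∈ insert x t, f i = f x * ∏ i ∈ t, f i := by
        intro t ht
        rw [Finset.mem_powersetCard] at ht
        rw [Finset.prod_insert (fun hmem => hx (ht.1 hmem))]
      rw [Finset.sum_congr rfl hins, ← Finset.mul_sum, Finset.powersetCard_one,
        Finset.sum_map, Finset.sum_insert hx, Finset.sum_insert hx]
      simp only [Function.Embedding.coeFn_mk, Finset.prod_singleton]
      nlinarith [ih]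
    · intro t ht u hu htu
      rw [Finset.mem_coe, Finset.mem_powersetCard] at ht hu
      have hxt : x ∉ t := fun hmem => hx (ht.1 hmem)
      have hxu : x ∉ u := fun hmem => hx (hu.1 hmem)
      ext a
      constructor <;> intro ha
      · have : a ∈ insert x t := Finset.mem_insert_of_mem ha
        rw [htu] at this
        rcases Finset.mem_insert.mp this with h | h
        · exact absurd (h ▸ ha) hxt
        · exact h
      · have : a ∈ insert x u := Finset.mem_insert_of_mem ha
        rw [← htu] at this
        rcases Finset.mem_insert.mp this with h | h
        · exact absurd (h ▸ ha) hxu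
        · exact h
    · rw [Finset.disjoint_right]
      intro t ht ht'
      rw [Finset.mem_image] at ht
      obtain ⟨u, hu, rfl⟩ := ht
      rw [Finset.mem_powersetCard] at ht'
      exact hx (ht'.1 (Finset.mem_insert_self x u))

lemma esymm_one_eq (n : ℕ) (lam : Fin n → ℝ) : esymm n 1 lam = ∑ i, lam i := by
  simp [esymm, Finset.powersetCard_one, Finset.sum_map]

lemma esymm_two_eq (n : ℕ) (lam : Fin n → ℝ) :
    2 * esymm n 2 lam = (∑ i, lam i) ^ 2 - ∑ i, (lam i) ^ 2 :=
  esymm_two_aux _ _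

lemma offdiag_sum (n : ℕ) (v : Fin n → ℝ) :
    (∑ i, ∑ j ∈ Finset.univ.erase i, v i * v j) = (∑ i, v i) ^ 2 - ∑ i, (v i) ^ 2 := by
  have h : ∀ i : Fin n, ∑ j ∈ Finset.univ.erase i, v i * v j
      = v i * (∑ j, v j) - v i ^ 2 := by
    intro i
    rw [Finset.sum_erase_eq_sub (Finset.mem_univ i), ← Finset.mul_sum]
    ring
  rw [Finset.sum_congr rfl fun i _ => h i, Finset.sum_sub_distrib, ← Finset.sum_mul]
  ring

set_option maxHeartbeats 1000000 in
/-- For `λ` in the Gårding cone `Γ₂` and any `v ∈ ℝ^n`,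
`2 σ₂(λ) ∑_{i≠j} v_i v_j ≤ (∑_i (σ₁(λ) - λ_i) v_i)^2`. -/
theorem garding_quadratic_ineq (n : ℕ) (hn : 2 ≤ n) (lam v : Fin n → ℝ)
    (h1 : 0 < esymm n 1 lam) (h2 : 0 < esymm n 2 lam) :
    2 * esymm n 2 lam * (∑ i, ∑ j ∈ Finset.univ.erase i, v i * v j) ≤
      (∑ i, (esymm n 1 lam - lam i) * v i) ^ 2 := by
  set S := ∑ i, lam i with hS
  set T := ∑ i, v i with hT
  set P := ∑ i, (lam i) ^ 2 with hP
  set U := ∑ i, (v i) ^ 2 with hU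
  set W := ∑ i, lam i * v i with hW
  set q := S ^ 2 - P with hq
  set Bv := S * T - W with hBv
  have hSpos : 0 < S := by rwa [esymm_one_eq] at h1
  have h2σ : 2 * esymm n 2 lam = q := by rw [esymm_two_eq n lam, ← hS, ← hP]
  have hqpos : 0 < q := by rw [← h2σ]; positivity
  have hBsum : (∑ i, (esymm n 1 lam - lam i) * v i) = Bv := by
    rw [esymm_one_eq, hBv, hW, hT, ← hS, Finset.mul_sum, ← Finset.sum_sub_distrib]
    exact Finset.sum_congr rfl fun i _ => by ring
  rw [hBsum, offdiag_sum, h2σ, ← hT, ← hU]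
  set g : Fin n → ℝ := fun i => q * v i - Bv * lam i with hg
  have hCS := Finset.sum_mul_sq_le_sq_mul_sq Finset.univ lam g
  have hsum_lg : (∑ i, lam i * g i) = q * W - Bv * P := by
    rw [hW, hP, Finset.mul_sum, Finset.mul_sum, ← Finset.sum_sub_distrib]
    exact Finset.sum_congr rfl fun i _ => by simp only [hg]; ring
  have hsum_g2 : (∑ i, (g i) ^ 2) = q ^ 2 * U - 2 * q * Bv * W + Bv ^ 2 * P := by
    rw [hU, hW, hP, Finset.mul_sum, Finset.mul_sum, Finset.mul_sum,
      ← Finset.sum_sub_distrib, ← Finset.sum_add_distrib]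
    exact Finset.sum_congr rfl fun i _ => by simp only [hg]; ring
  have hg2nonneg : 0 ≤ ∑ i, (g i) ^ 2 := Finset.sum_nonneg fun i _ => sq_nonneg (g i)
  rw [hsum_lg, hsum_g2, ← hP] at hCS
  rw [hsum_g2] at hg2nonneg
  have horth : q * W - Bv * P = S * (q * T - Bv * S) := by rw [hq, hBv]; ring
  rw [horth] at hCS
  have key : (q * T - Bv * S) ^ 2 ≤ q ^ 2 * U - 2 * q * Bv * W + Bv ^ 2 * P := by
    nlinarith [hCS, hg2nonneg, mul_pos hSpos hSpos, mul_nonneg hqpos.le hg2nonneg, hq]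
  have expand : q ^ 2 * (T ^ 2 - U) - q * Bv ^ 2 ≤ 0 := by
    have hid : (q * T - Bv * S) ^ 2 - (q ^ 2 * U - 2 * q * Bv * W + Bv ^ 2 * P) =
        q ^ 2 * (T ^ 2 - U) - q * Bv ^ 2 := by rw [hq, hBv]; ring
    nlinarith [key]
  nlinarith [expand, hqpos]
end

section
/- For every n ≥ 2 there exists a constant C(n) > 0 such that for all λ ∈ ℝ^n lying in the Gårding cone Γ₂ (σ₁(λ) > 0 and σ₂(λ) > 0), one has σ₁(λ)σ₂(λ) − 3σ₃(λ) ≥ C(n) · σ₂(λ)^{3/2}. -/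
open Finset

set_option linter.unusedSectionVars false

section aux

variable {α : Type*} [DecidableEq α] (f : α → ℝ)

/-- Elementary symmetric function over a finset. -/
noncomputable def Es (k : ℕ) (s : Finset α) : ℝ :=
  ∑ t ∈ s.powersetCard k, ∏ i ∈ t, f i

lemma powersetCard_empty' (k : ℕ) (hk : 0 < k) : (∅ : Finset α).powersetCard k = ∅ :=
  Finset.powersetCard_eq_empty.mpr (by simpa)

lemma Es_zero (s : Finset α) : Es f 0 s = 1 := by
  simp [Es]

lemma Es_succ {a : α} {s : Finset α} (h : a ∉ s) (k : ℕ) :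
    Es f (k + 1) (insert a s) = Es f (k + 1) s + f a * Es f k s := by
  unfold Es
  rw [Finset.powersetCard_succ_insert h, Finset.sum_union, Finset.sum_image, Finset.mul_sum]
  · congr 1
    refine Finset.sum_congr rfl fun t ht => ?_
    have hat : a ∉ t := fun hat => h ((Finset.mem_powersetCard.mp ht).1 hat)
    rw [Finset.prod_insert hat]
  · intro t ht t' ht' hins
    have hat : a ∉ t := fun hat => h ((Finset.mem_powersetCard.mp ht).1 hat)
    have hat' : a ∉ t' := fun hat => h ((Finset.mem_powersetCard.mp ht').1 hat)
    have := congrArg (Finset.erase · a) hins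
    simpa [Finset.erase_insert hat, Finset.erase_insert hat'] using this
  · rw [Finset.disjoint_left]
    intro t ht ht'
    have hat : a ∉ t := fun hat => h ((Finset.mem_powersetCard.mp ht).1 hat)
    obtain ⟨u, hu, rfl⟩ := Finset.mem_image.mp ht'
    exact hat (Finset.mem_insert_self a u)

lemma Es_one (s : Finset α) : Es f 1 s = ∑ i ∈ s, f i := by
  rw [Es, Finset.powersetCard_one, Finset.sum_map]
  simp

lemma sq_sum_eq (s : Finset α) :
    (∑ i ∈ s, f i) ^ 2 = (∑ i ∈ s, f i ^ 2) + 2 * Es f 2 s := by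
  classical
  induction s using Finset.induction_on with
  | empty => simp [Es, powersetCard_empty' 2 (by norm_num)]
  | insert _ _ h ih =>
    rename_i a s
    rw [Finset.sum_insert h, Finset.sum_insert h, Es_succ f h, Es_one]
    simp only [show (1 + 1 : ℕ) = 2 from rfl]
    linear_combination ih

lemma key_identity (s : Finset α) :
    Es f 1 s * Es f 2 s - 3 * Es f 3 s =
      (∑ i ∈ s, f i) * (∑ i ∈ s, f i ^ 2) - ∑ i ∈ s, f i ^ 3 := by
  classical
  induction s using Finset.induction_on with
  | empty =>
    simp [Es, powersetCard_empty' 1 (by norm_num), powersetCard_empty' 2 (by norm_num),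
      powersetCard_empty' 3 (by norm_num)]
  | insert _ _ h ih =>
    rename_i a s
    have h1 := Es_one f s
    have h2 := sq_sum_eq f s
    rw [Es_succ f h 0, Es_succ f h 1, Es_succ f h 2, Es_zero, Es_one,
      Finset.sum_insert h, Finset.sum_insert h, Finset.sum_insert h]
    simp only [show (0 + 1 : ℕ) = 1 from rfl, show (1 + 1 : ℕ) = 2 from rfl,
      show (2 + 1 : ℕ) = 3 from rfl]
    linear_combination ih - Es f 2 s * h1 + f a * h2

end aux

/-- For every `n ≥ 2` there is a constant `C(n) > 0` such that for all `λ` in the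
Gårding cone `Γ₂`, `σ₁(λ)σ₂(λ) - 3σ₃(λ) ≥ C(n) σ₂(λ)^{3/2}`. -/
theorem sigma1_sigma2_sub_three_sigma3_lower_bound (n : ℕ) (hn : 2 ≤ n) :
    ∃ C : ℝ, 0 < C ∧ ∀ lam : Fin n → ℝ, 0 < esymm n 1 lam → 0 < esymm n 2 lam →
      esymm n 1 lam * esymm n 2 lam - 3 * esymm n 3 lam ≥
        C * esymm n 2 lam ^ ((3 : ℝ) / 2) := by
  have hnpos : (0 : ℝ) < n := by positivity
  refine ⟨Real.sqrt 2 / n, by positivity, fun lam h1 h2 => ?_⟩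
  set e1 := esymm n 1 lam with he1def
  set e2 := esymm n 2 lam with he2def
  set e3 := esymm n 3 lam with he3def
  have hE1 : e1 = Es lam 1 Finset.univ := rfl
  have hE2 : e2 = Es lam 2 Finset.univ := rfl
  have hE3 : e3 = Es lam 3 Finset.univ := rfl
  have he1 : e1 = ∑ i, lam i := by rw [hE1, Es_one]
  have hkey : e1 * e2 - 3 * e3 =
      (∑ i, lam i) * (∑ i, lam i ^ 2) - ∑ i, lam i ^ 3 := by
    rw [hE1, hE2, hE3]; exact key_identity lam Finset.univ
  have hsum_form : e1 * e2 - 3 * e3 = ∑ i, lam i ^ 2 * (e1 - lam i) := by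
    rw [hkey, he1]
    rw [Finset.mul_sum, ← Finset.sum_sub_distrib]
    refine Finset.sum_congr rfl fun i _ => ?_
    ring
  -- per index bound: e2 ≤ e1 * (e1 - lam i)
  have hper : ∀ i : Fin n, e2 ≤ e1 * (e1 - lam i) := by
    intro i
    set s : Finset (Fin n) := Finset.univ.erase i with hs
    have hins : insert i s = Finset.univ := Finset.insert_erase (Finset.mem_univ i)
    have hinotin : i ∉ s := Finset.notMem_erase i _
    have hS : e1 = lam i + ∑ j ∈ s, lam j := by
      rw [he1, ← hins, Finset.sum_insert hinotin]
    have hE2s : e2 = Es lam 2 s + lam i * (∑ j ∈ s, lam j) := by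
      rw [hE2, ← hins, Es_succ lam hinotin 1, Es_one]
    have hsq : (∑ j ∈ s, lam j) ^ 2 = (∑ j ∈ s, lam j ^ 2) + 2 * Es lam 2 s :=
      sq_sum_eq lam s
    have hq : 0 ≤ ∑ j ∈ s, lam j ^ 2 := Finset.sum_nonneg fun j _ => sq_nonneg _
    have h' : e1 * (e1 - lam i) - e2 = (∑ j ∈ s, lam j) ^ 2 - Es lam 2 s := by
      rw [hS, hE2s]; ring
    linarith [hsq, hq, sq_nonneg (∑ j ∈ s, lam j)]
  have he1pos : 0 < e1 := h1
  have he2pos : 0 < e2 := h2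
  have hstep1 : ∑ i, lam i ^ 2 * (e1 - lam i) ≥ (e2 / e1) * ∑ i, lam i ^ 2 := by
    rw [Finset.mul_sum]
    refine Finset.sum_le_sum fun i _ => ?_
    have : e2 / e1 ≤ e1 - lam i := (div_le_iff₀ he1pos).mpr (by linarith [hper i, mul_comm e1 (e1 - lam i)])
    calc e2 / e1 * lam i ^ 2 = lam i ^ 2 * (e2 / e1) := by ring
    _ ≤ lam i ^ 2 * (e1 - lam i) := by
        exact mul_le_mul_of_nonneg_left this (sq_nonneg _)
  have hCS : e1 ^ 2 ≤ n * ∑ i, lam i ^ 2 := by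
    have := sq_sum_le_card_mul_sum_sq (s := (Finset.univ : Finset (Fin n))) (f := lam)
    rw [← he1] at this
    simpa using this
  have hp2 : e1 ^ 2 = (∑ i, lam i ^ 2) + 2 * e2 := by
    rw [he1, hE2]; exact sq_sum_eq lam Finset.univ
  have hp2nonneg : 0 ≤ ∑ i, lam i ^ 2 := Finset.sum_nonneg fun j _ => sq_nonneg _
  have he1sq : 2 * e2 ≤ e1 ^ 2 := by linarith
  have he1ge : Real.sqrt (2 * e2) ≤ e1 := by
    have := Real.sqrt_le_sqrt he1sq
    rwa [Real.sqrt_sq he1pos.le] at this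
  -- assemble
  have hstep2 : (e2 / e1) * ∑ i, lam i ^ 2 ≥ e1 * e2 / n := by
    have h1' : e1 ^ 2 / n ≤ ∑ i, lam i ^ 2 := by
      rw [div_le_iff₀ hnpos]; linarith [hCS]
    have := mul_le_mul_of_nonneg_left h1' (le_of_lt (div_pos he2pos he1pos))
    calc e1 * e2 / n = (e2 / e1) * (e1 ^ 2 / n) := by field_simp
    _ ≤ (e2 / e1) * ∑ i, lam i ^ 2 := this
  have hrpow : e2 ^ ((3 : ℝ) / 2) = e2 * Real.sqrt e2 := by
    rw [show (3 : ℝ) / 2 = 1 + 1 / 2 by norm_num, Real.rpow_add he2pos, Real.rpow_one,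
      Real.sqrt_eq_rpow]
  have hsqrt2 : Real.sqrt (2 * e2) = Real.sqrt 2 * Real.sqrt e2 :=
    Real.sqrt_mul (by norm_num) e2
  have hstep3 : e1 * e2 / n ≥ Real.sqrt 2 / n * e2 ^ ((3 : ℝ) / 2) := by
    rw [hrpow, ge_iff_le, div_mul_eq_mul_div, div_le_div_iff_of_pos_right hnpos]
    have : Real.sqrt 2 * Real.sqrt e2 ≤ e1 := by rw [← hsqrt2]; exact he1ge
    calc Real.sqrt 2 * (e2 * Real.sqrt e2) = (Real.sqrt 2 * Real.sqrt e2) * e2 := by ring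
    _ ≤ e1 * e2 := mul_le_mul_of_nonneg_right this he2pos.le
  calc e1 * e2 - 3 * e3 = ∑ i, lam i ^ 2 * (e1 - lam i) := hsum_form
  _ ≥ (e2 / e1) * ∑ i, lam i ^ 2 := hstep1
  _ ≥ e1 * e2 / n := hstep2
  _ ≥ Real.sqrt 2 / n * e2 ^ ((3 : ℝ) / 2) := hstep3
end

section
/- Let n ≥ 2, let λ ∈ ℝ^n lie in the Gårding cone Γ₂ (σ₁(λ) > 0 and σ₂(λ) > 0), and let T : Fin n × Fin n × Fin n → ℝ be fully symmetric (invariant under all permutations of the indices). Then Σ_{i,j,k} T_{ijk}² − Σ_k (Σ_i T_{iik})² ≥ 2 Σ_{i≠j} T_{iij}² − (1/(2σ₂(λ))) Σ_k (Σ_i (σ₁(λ) − λ_i) T_{iik})². -/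
lemma esymm2_aux {ι : Type*} [DecidableEq ι] (s : Finset ι) (f : ι → ℝ) :
    2 * ∑ t ∈ s.powersetCard 2, ∏ i ∈ t, f i = (∑ i ∈ s, f i)^2 - ∑ i ∈ s, f i ^ 2 := by
  induction s using Finset.induction with
  | empty =>
    rw [Finset.powersetCard_eq_empty.2 (by simp)]
    simp
  | @insert a s ha ih =>
    rw [show (2:ℕ) = 1 + 1 from rfl, Finset.powersetCard_succ_insert ha]
    have hdisj : Disjoint (s.powersetCard (1+1)) ((s.powersetCard 1).image (insert a)) := by
      rw [Finset.disjoint_right]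
      intro t ht hts
      simp only [Finset.mem_image] at ht
      obtain ⟨u, hu, rfl⟩ := ht
      exact ha ((Finset.mem_powersetCard.1 hts).1 (Finset.mem_insert_self a u))
    rw [Finset.sum_union hdisj]
    have hinj : ∀ t ∈ s.powersetCard 1, ∀ t' ∈ s.powersetCard 1,
        insert a t = insert a t' → t = t' := by
      intro t ht t' ht' h
      have hat : a ∉ t := fun h' => ha ((Finset.mem_powersetCard.1 ht).1 h')
      have hat' : a ∉ t' := fun h' => ha ((Finset.mem_powersetCard.1 ht').1 h')
      rw [← Finset.erase_insert hat, ← Finset.erase_insert hat', h]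
    rw [Finset.sum_image hinj]
    have hprod : ∀ t ∈ s.powersetCard 1, ∏ i ∈ insert a t, f i = f a * ∏ i ∈ t, f i := by
      intro t ht
      exact Finset.prod_insert (fun h' => ha ((Finset.mem_powersetCard.1 ht).1 h'))
    rw [Finset.sum_congr rfl hprod, ← Finset.mul_sum]
    have h1 : ∑ t ∈ s.powersetCard 1, ∏ i ∈ t, f i = ∑ i ∈ s, f i := by
      rw [Finset.powersetCard_one, Finset.sum_map]
      simp
    rw [h1, Finset.sum_insert ha, Finset.sum_insert ha]
    linear_combination ih

lemma lorentz_aux (σ L D s q c A2 : ℝ) (hσ : 0 < σ) (hD : 0 < D) (hDdef : D = σ^2 - L)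
    (hcD : c * D = σ * s - q)
    (hCS : (q - c*L)^2 ≤ L * (A2 - 2*c*q + c^2*L))
    (hX2 : 0 ≤ A2 - 2*c*q + c^2*L) :
    s^2 - A2 ≤ c^2 * D := by
  have hLσ : L ≤ σ^2 := by nlinarith
  have orth : σ * (s - c*σ) = q - c*L := by linear_combination c * hDdef - hcD
  have h1 : σ^2 * (s - c*σ)^2 = (q - c*L)^2 := by
    linear_combination (σ*(s-c*σ) + (q-c*L)) * orth
  have h2 : L * (A2 - 2*c*q + c^2*L) ≤ σ^2 * (A2 - 2*c*q + c^2*L) :=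
    mul_le_mul_of_nonneg_right hLσ hX2
  have hσ2 : 0 < σ^2 := by positivity
  have hxx : (s - c*σ)^2 ≤ A2 - 2*c*q + c^2*L := le_of_mul_le_mul_left (by nlinarith) hσ2
  have key : s^2 - A2 = (s - c*σ)^2 - (A2 - 2*c*q + c^2*L) + 2*c*(c*D) - c^2*(σ^2 - L) := by
    rw [hcD]; ring
  rw [← hDdef] at key
  linarith

lemma quad_aux {n : ℕ} (lam a : Fin n → ℝ) (hσ : 0 < ∑ i, lam i)
    (hD : 0 < (∑ i, lam i)^2 - ∑ i, lam i ^ 2) :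
    (∑ i, a i)^2 - ∑ i, a i ^ 2 ≤
      (∑ i, ((∑ j, lam j) - lam i) * a i)^2 / ((∑ i, lam i)^2 - ∑ i, lam i ^ 2) := by
  set σ := ∑ i, lam i with hσdef
  set L := ∑ i, lam i ^ 2 with hL
  set s := ∑ i, a i with hs
  set q := ∑ i, lam i * a i with hq
  set A2 := ∑ i, a i ^ 2 with hA2
  have hDne : σ^2 - L ≠ 0 := hD.ne'
  set c := (σ * s - q) / (σ^2 - L) with hc
  have hE : (∑ i, (σ - lam i) * a i) = σ * s - q := by
    simp_rw [sub_mul, Finset.sum_sub_distrib, ← Finset.mul_sum]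
    rfl
  have e1 : ∑ i, lam i * (a i - c * lam i) = q - c * L := by
    rw [hq, hL, Finset.mul_sum, ← Finset.sum_sub_distrib]
    exact Finset.sum_congr rfl fun i _ => by ring
  have e2 : ∑ i, (a i - c * lam i)^2 = A2 - 2*c*q + c^2 * L := by
    rw [hA2, hq, hL, Finset.mul_sum, Finset.mul_sum, ← Finset.sum_sub_distrib,
      ← Finset.sum_add_distrib]
    exact Finset.sum_congr rfl fun i _ => by ring
  have hCS : (q - c*L)^2 ≤ L * (A2 - 2*c*q + c^2*L) := by
    rw [← e1, ← e2, hL]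
    exact Finset.sum_mul_sq_le_sq_mul_sq Finset.univ lam _
  have hX2 : (0:ℝ) ≤ A2 - 2*c*q + c^2*L := by
    rw [← e2]; exact Finset.sum_nonneg fun i _ => sq_nonneg _
  have main := lorentz_aux σ L (σ^2 - L) s q c A2 hσ hD rfl
    (div_mul_cancel₀ _ hDne) hCS hX2
  have hcD : c * (σ^2 - L) = σ * s - q := div_mul_cancel₀ _ hDne
  have hconv : c^2 * (σ^2 - L) = (σ * s - q)^2 / (σ^2 - L) := by
    rw [eq_div_iff hDne]
    linear_combination (c*(σ^2 - L) + (σ*s - q)) * hcD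
  rw [hE]
  rw [hconv] at main
  exact main



/-- For `λ` in the Gårding cone `Γ₂` and a fully symmetric `T`,
`∑_{i,j,k} T_{ijk}² - ∑_k (∑_i T_{iik})²
  ≥ 2 ∑_{i≠j} T_{iij}² - (1/(2σ₂(λ))) ∑_k (∑_i (σ₁(λ) - λ_i) T_{iik})²`. -/
theorem sym_tensor_norm_garding_ineq (n : ℕ) (hn : 2 ≤ n) (lam : Fin n → ℝ)
    (h1 : 0 < esymm n 1 lam) (h2 : 0 < esymm n 2 lam)
    (T : Fin n × Fin n × Fin n → ℝ)
    (hsymm : ∀ i j k : Fin n, T (i, j, k) = T (j, i, k) ∧ T (i, j, k) = T (i, k, j)) :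
    (∑ i, ∑ j, ∑ k, T (i, j, k) ^ 2) - ∑ k, (∑ i, T (i, i, k)) ^ 2 ≥
      2 * (∑ i, ∑ j ∈ Finset.univ.erase i, T (i, i, j) ^ 2)
        - (1 / (2 * esymm n 2 lam)) *
            ∑ k, (∑ i, (esymm n 1 lam - lam i) * T (i, i, k)) ^ 2 := by
  have e1eq : esymm n 1 lam = ∑ i, lam i := by
    rw [esymm, Finset.powersetCard_one, Finset.sum_map]
    simp
  have e2eq : 2 * esymm n 2 lam = (∑ i, lam i)^2 - ∑ i, lam i ^ 2 := esymm2_aux _ _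
  have hσ : 0 < ∑ i, lam i := by rwa [e1eq] at h1
  have hD : 0 < (∑ i, lam i)^2 - ∑ i, lam i ^ 2 := by rw [← e2eq]; linarith
  set D := (∑ i, lam i)^2 - ∑ i, lam i ^ 2 with hDdef
  -- Step 1 : pointwise counting bound
  have hA : (∑ i, ∑ j, ∑ k, T (i, j, k) ^ 2) = ∑ k, ∑ i, ∑ j, T (i, j, k) ^ 2 := by
    rw [show (∑ i, ∑ j, ∑ k, T (i, j, k) ^ 2) = ∑ i, ∑ k, ∑ j, T (i, j, k) ^ 2 from
      Finset.sum_congr rfl fun i _ => Finset.sum_comm ..]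
    exact Finset.sum_comm ..
  have hk : ∀ k, (∑ i, T (i, i, k) ^ 2)
      + 2 * ∑ j ∈ Finset.univ.erase k, T (k, k, j) ^ 2 ≤ ∑ i, ∑ j, T (i, j, k) ^ 2 := by
    intro k
    have split : (∑ i, ∑ j, T (i, j, k) ^ 2)
        = (∑ i, T (i, i, k) ^ 2) + ∑ i, ∑ j ∈ Finset.univ.erase i, T (i, j, k) ^ 2 := by
      rw [← Finset.sum_add_distrib]
      exact Finset.sum_congr rfl fun i _ =>
        (Finset.add_sum_erase _ _ (Finset.mem_univ i)).symm
    have split2 : (∑ i, ∑ j ∈ Finset.univ.erase i, T (i, j, k) ^ 2)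
        = (∑ j ∈ Finset.univ.erase k, T (k, j, k) ^ 2)
          + ∑ i ∈ Finset.univ.erase k, ∑ j ∈ Finset.univ.erase i, T (i, j, k) ^ 2 :=
      (Finset.add_sum_erase _ (fun i => ∑ j ∈ Finset.univ.erase i, T (i, j, k) ^ 2)
        (Finset.mem_univ k)).symm
    have hlow : ∑ i ∈ Finset.univ.erase k, T (i, k, k) ^ 2
        ≤ ∑ i ∈ Finset.univ.erase k, ∑ j ∈ Finset.univ.erase i, T (i, j, k) ^ 2 := by
      refine Finset.sum_le_sum fun i hi => ?_
      have hik : i ≠ k := (Finset.mem_erase.1 hi).1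
      exact Finset.single_le_sum (f := fun j => T (i, j, k) ^ 2) (fun j _ => sq_nonneg _)
        (Finset.mem_erase.2 ⟨hik.symm, Finset.mem_univ k⟩)
    have sym1 : ∀ j, T (k, j, k) ^ 2 = T (k, k, j) ^ 2 := fun j => by
      rw [(hsymm k j k).2]
    have sym2 : ∀ i, T (i, k, k) ^ 2 = T (k, k, i) ^ 2 := fun i => by
      rw [(hsymm i k k).1, (hsymm k i k).2]
    have h1' : (∑ j ∈ Finset.univ.erase k, T (k, j, k) ^ 2)
        = ∑ j ∈ Finset.univ.erase k, T (k, k, j) ^ 2 :=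
      Finset.sum_congr rfl fun j _ => sym1 j
    have h2' : (∑ i ∈ Finset.univ.erase k, T (i, k, k) ^ 2)
        = ∑ i ∈ Finset.univ.erase k, T (k, k, i) ^ 2 :=
      Finset.sum_congr rfl fun i _ => sym2 i
    rw [split, split2, h1']
    rw [h2'] at hlow
    linarith
  have step1 : (∑ k, ∑ i, T (i, i, k) ^ 2)
      + 2 * (∑ i, ∑ j ∈ Finset.univ.erase i, T (i, i, j) ^ 2)
      ≤ ∑ i, ∑ j, ∑ k, T (i, j, k) ^ 2 := by
    rw [hA, Finset.mul_sum, ← Finset.sum_add_distrib]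
    exact Finset.sum_le_sum fun k _ => hk k
  -- Step 2 : Lorentzian Cauchy-Schwarz per k
  have step2 : (∑ k, (∑ i, T (i, i, k)) ^ 2) - (∑ k, ∑ i, T (i, i, k) ^ 2)
      ≤ (∑ k, (∑ i, ((∑ j, lam j) - lam i) * T (i, i, k)) ^ 2) / D := by
    rw [Finset.sum_div, ← Finset.sum_sub_distrib]
    exact Finset.sum_le_sum fun k _ => by
      have := quad_aux lam (fun i => T (i, i, k)) hσ hD
      linarith [this]
  rw [e1eq, e2eq]
  have hone : (1 / D) * (∑ k, (∑ i, ((∑ j, lam j) - lam i) * T (i, i, k)) ^ 2)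
      = (∑ k, (∑ i, ((∑ j, lam j) - lam i) * T (i, i, k)) ^ 2) / D := by
    rw [one_div, inv_mul_eq_div]
  rw [ge_iff_le]
  linarith [step1, step2, hone]
end

section
/- Let E = EuclideanSpace ℝ (Fin n). Let ψ_{ij} : E → ℝ (i, j ∈ Fin n) be C¹ functions with ψ_{ij} = ψ_{ji} and Σ_j ∂_j ψ_{ij} = 0 everywhere for each i, and let f : E → ℝ be C¹. For a C² function w : E → ℝ define □_{ψ,f} w := Σ_{i,j} ψ_{ij} ∂²_{ij} w − Σ_{i,j} ψ_{ij} (∂_i f)(∂_j w). Then for all C² compactly supported functions u, v : E → ℝ, ∫_E (□_{ψ,f} u)(x) · v(x) · e^{−f(x)} dx = −∫_E Σ_{i,j} ψ_{ij}(x) (∂_i u)(x) (∂_j v)(x) e^{−f(x)} dx (integration with respect to Lebesgue measure); in particular ∫_E (□_{ψ,f} u) v e^{−f} dx = ∫_E u (□_{ψ,f} v) e^{−f} dx, i.e. □_{ψ,f} is self-adjoint with respect to the weighted measure e^{−f} dx. -/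
open MeasureTheory

/-- Directional derivative of `g` at `x` along the `k`-th standard basis vector. -/
noncomputable def pd {n : ℕ} (g : EuclideanSpace ℝ (Fin n) → ℝ) (k : Fin n)
    (x : EuclideanSpace ℝ (Fin n)) : ℝ :=
  fderiv ℝ g x (EuclideanSpace.single k 1)

/-- Second directional derivative `∂²_{ij} w` at `x`. -/
noncomputable def pd2 {n : ℕ} (w : EuclideanSpace ℝ (Fin n) → ℝ) (i j : Fin n)
    (x : EuclideanSpace ℝ (Fin n)) : ℝ :=
  fderiv ℝ (fun y => fderiv ℝ w y (EuclideanSpace.single i 1)) x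
    (EuclideanSpace.single j 1)

/-- The operator `□_{ψ,f} w = ∑_{i,j} ψ_{ij} ∂²_{ij} w - ∑_{i,j} ψ_{ij} (∂_i f)(∂_j w)`. -/
noncomputable def boxOp {n : ℕ} (ψ : Fin n → Fin n → EuclideanSpace ℝ (Fin n) → ℝ)
    (f w : EuclideanSpace ℝ (Fin n) → ℝ) (x : EuclideanSpace ℝ (Fin n)) : ℝ :=
  (∑ i, ∑ j, ψ i j x * pd2 w i j x) - ∑ i, ∑ j, ψ i j x * pd f i x * pd w j x

section Aux

variable {n : ℕ}

lemma pd_cont {G : EuclideanSpace ℝ (Fin n) → ℝ} (hG : ContDiff ℝ 1 G) (k : Fin n) :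
    Continuous (pd G k) := by
  have h := (hG.fderiv_right (m := 0) (by norm_num)).continuous
  exact (ContinuousLinearMap.apply ℝ ℝ (EuclideanSpace.single k 1)).continuous.comp h

lemma pd_contDiff {G : EuclideanSpace ℝ (Fin n) → ℝ} (hG : ContDiff ℝ 2 G) (i : Fin n) :
    ContDiff ℝ 1 (pd G i) := by
  have h := hG.fderiv_right (m := 1) (by norm_num)
  exact (ContinuousLinearMap.apply ℝ ℝ (EuclideanSpace.single i 1)).contDiff.comp h

lemma pd_mul4 {a b c d : EuclideanSpace ℝ (Fin n) → ℝ} {x : EuclideanSpace ℝ (Fin n)}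
    (ha : DifferentiableAt ℝ a x) (hb : DifferentiableAt ℝ b x)
    (hc : DifferentiableAt ℝ c x) (hd : DifferentiableAt ℝ d x) (k : Fin n) :
    pd (fun y => a y * b y * c y * d y) k x =
      pd a k x * b x * c x * d x + a x * pd b k x * c x * d x
        + a x * b x * pd c k x * d x + a x * b x * c x * pd d k x := by
  unfold pd
  rw [fderiv_fun_mul (show DifferentiableAt ℝ (fun y => a y * b y * c y) x from (ha.mul hb).mul hc) hd,
    fderiv_fun_mul (show DifferentiableAt ℝ (fun y => a y * b y) x from ha.mul hb) hc, fderiv_fun_mul ha hb]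
  simp only [ContinuousLinearMap.add_apply, ContinuousLinearMap.smul_apply, smul_eq_mul]
  ring

lemma pd_exp_neg {f : EuclideanSpace ℝ (Fin n) → ℝ} {x : EuclideanSpace ℝ (Fin n)}
    (hf : DifferentiableAt ℝ f x) (k : Fin n) :
    pd (fun y => Real.exp (-f y)) k x = -pd f k x * Real.exp (-f x) := by
  unfold pd
  rw [fderiv_exp (f := fun y => -f y) hf.neg, fderiv_fun_neg]
  simp only [ContinuousLinearMap.smul_apply, ContinuousLinearMap.neg_apply, smul_eq_mul]
  ring

lemma integral_pd_eq_zero {G : EuclideanSpace ℝ (Fin n) → ℝ} (hG : ContDiff ℝ 1 G)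
    (hG' : HasCompactSupport G) (k : Fin n) : ∫ x, pd G k x = 0 := by
  obtain ⟨C, hC⟩ := ContDiff.lipschitzWith_of_hasCompactSupport hG' hG one_ne_zero
  have h1 : LipschitzWith 0 (fun _ : EuclideanSpace ℝ (Fin n) => (1 : ℝ)) :=
    LipschitzWith.const _
  have key := LipschitzWith.integral_lineDeriv_mul_eq (μ := volume) h1 hC hG'
    (-(EuclideanSpace.single k 1))
  have h2 : ∀ x : EuclideanSpace ℝ (Fin n),
      lineDeriv ℝ (fun _ : EuclideanSpace ℝ (Fin n) => (1:ℝ)) x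
        (-(EuclideanSpace.single k 1)) = 0 := by
    intro x; simp [lineDeriv]
  simp only [h2, zero_mul, integral_zero, neg_neg, mul_one] at key
  have h3 : (∫ x, pd G k x) = ∫ x, lineDeriv ℝ G x (EuclideanSpace.single k 1) :=
    integral_congr_ae (Filter.Eventually.of_forall fun x =>
      ((hG.differentiable one_ne_zero x).lineDeriv_eq_fderiv).symm)
  rw [h3, ← key]

/-- The auxiliary vector field whose divergence realizes the integration by parts. -/
noncomputable def gfun (ψ : Fin n → Fin n → EuclideanSpace ℝ (Fin n) → ℝ)
    (f u v : EuclideanSpace ℝ (Fin n) → ℝ) (i j : Fin n) :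
    EuclideanSpace ℝ (Fin n) → ℝ :=
  fun y => ψ i j y * pd u i y * v y * Real.exp (-f y)

lemma boxOp_ibp (ψ : Fin n → Fin n → EuclideanSpace ℝ (Fin n) → ℝ)
    (hψ : ∀ i j, ContDiff ℝ 1 (ψ i j))
    (hsymm : ∀ i j x, ψ i j x = ψ j i x)
    (hdiv : ∀ i x, ∑ j, pd (ψ i j) j x = 0)
    (f : EuclideanSpace ℝ (Fin n) → ℝ) (hf : ContDiff ℝ 1 f)
    (u v : EuclideanSpace ℝ (Fin n) → ℝ)
    (hu : ContDiff ℝ 2 u) (hv : ContDiff ℝ 2 v)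
    (hv' : HasCompactSupport v) :
    (∫ x, boxOp ψ f u x * v x * Real.exp (-f x)) =
      -∫ x, (∑ i, ∑ j, ψ i j x * pd u i x * pd v j x) * Real.exp (-f x) := by
  have hgC : ∀ i j, ContDiff ℝ 1 (gfun ψ f u v i j) := fun i j =>
    (((hψ i j).mul (pd_contDiff hu i)).mul (hv.of_le one_le_two)).mul (hf.neg.exp)
  have hgcs : ∀ i j, HasCompactSupport (gfun ψ f u v i j) := by
    intro i j
    refine hv'.mono' (Function.support_subset_iff'.2 fun x hx => ?_)
    simp [gfun, image_eq_zero_of_notMem_tsupport hx]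
  have hint : ∀ i j, Integrable (pd (gfun ψ f u v i j) j) := fun i j =>
    (pd_cont (hgC i j) j).integrable_of_hasCompactSupport
      ((hgcs i j).fderiv_apply ℝ (EuclideanSpace.single j 1))
  -- pointwise computation of the divergence
  have hpt : ∀ x, (∑ i, ∑ j, pd (gfun ψ f u v i j) j x) =
      boxOp ψ f u x * v x * Real.exp (-f x) +
        (∑ i, ∑ j, ψ i j x * pd u i x * pd v j x) * Real.exp (-f x) := by
    intro x
    have hterm : ∀ i j : Fin n, pd (gfun ψ f u v i j) j x =
        pd (ψ i j) j x * pd u i x * v x * Real.exp (-f x)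
          + ψ i j x * pd2 u i j x * v x * Real.exp (-f x)
          + ψ i j x * pd u i x * pd v j x * Real.exp (-f x)
          - ψ i j x * pd u i x * v x * pd f j x * Real.exp (-f x) := by
      intro i j
      have h : pd (gfun ψ f u v i j) j x =
          pd (ψ i j) j x * pd u i x * v x * Real.exp (-f x)
            + ψ i j x * pd (pd u i) j x * v x * Real.exp (-f x)
            + ψ i j x * pd u i x * pd v j x * Real.exp (-f x)
            + ψ i j x * pd u i x * v x * pd (fun y => Real.exp (-f y)) j x :=
        pd_mul4 ((hψ i j).differentiable one_ne_zero x)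
          ((pd_contDiff hu i).differentiable one_ne_zero x)
          (hv.differentiable two_ne_zero x)
          (((hf.differentiable one_ne_zero x).neg).exp) j
      rw [h, pd_exp_neg (hf.differentiable one_ne_zero x) j,
        show pd (pd u i) j x = pd2 u i j x from rfl]
      ring
    simp only [hterm]
    simp only [Finset.sum_sub_distrib, Finset.sum_add_distrib]
    have e1 : ∑ i, ∑ j, pd (ψ i j) j x * pd u i x * v x * Real.exp (-f x) = 0 := by
      have h1 : ∀ i : Fin n, ∑ j, pd (ψ i j) j x * pd u i x * v x * Real.exp (-f x)
          = (∑ j, pd (ψ i j) j x) * (pd u i x * v x * Real.exp (-f x)) := by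
        intro i
        rw [Finset.sum_mul]
        exact Finset.sum_congr rfl fun j _ => by ring
      simp [h1, hdiv]
    have e2 : ∑ i, ∑ j, ψ i j x * pd u i x * v x * pd f j x * Real.exp (-f x)
        = (∑ i, ∑ j, ψ i j x * pd f i x * pd u j x) * (v x * Real.exp (-f x)) := by
      calc ∑ i, ∑ j, ψ i j x * pd u i x * v x * pd f j x * Real.exp (-f x)
          = ∑ j, ∑ i, ψ i j x * pd u i x * v x * pd f j x * Real.exp (-f x) :=
            Finset.sum_comm
        _ = ∑ j, ∑ i, ψ j i x * pd f j x * pd u i x * (v x * Real.exp (-f x)) := by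
            refine Finset.sum_congr rfl fun j _ => Finset.sum_congr rfl fun i _ => ?_
            rw [hsymm i j]; ring
        _ = (∑ i, ∑ j, ψ i j x * pd f i x * pd u j x) * (v x * Real.exp (-f x)) := by
            rw [Finset.sum_mul]
            exact Finset.sum_congr rfl fun j _ => by rw [Finset.sum_mul]
    have e3 : ∑ i, ∑ j, ψ i j x * pd2 u i j x * v x * Real.exp (-f x)
        = (∑ i, ∑ j, ψ i j x * pd2 u i j x) * (v x * Real.exp (-f x)) := by
      rw [Finset.sum_mul]
      refine Finset.sum_congr rfl fun i _ => ?_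
      rw [Finset.sum_mul]
      exact Finset.sum_congr rfl fun j _ => by ring
    have e4 : ∑ i, ∑ j, ψ i j x * pd u i x * pd v j x * Real.exp (-f x)
        = (∑ i, ∑ j, ψ i j x * pd u i x * pd v j x) * Real.exp (-f x) := by
      rw [Finset.sum_mul]
      refine Finset.sum_congr rfl fun i _ => ?_
      rw [Finset.sum_mul]
    rw [e1, e2, e3, e4]
    unfold boxOp
    ring
  -- the integral of the divergence vanishes
  have h0 : (∫ x, ∑ i, ∑ j, pd (gfun ψ f u v i j) j x) = 0 := by
    rw [integral_finset_sum _ (fun i _ => integrable_finset_sum _ (fun j _ => hint i j))]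
    refine Finset.sum_eq_zero fun i _ => ?_
    rw [integral_finset_sum _ (fun j _ => hint i j)]
    exact Finset.sum_eq_zero fun j _ => integral_pd_eq_zero (hgC i j) (hgcs i j) j
  -- integrability of both summands
  have cψ : ∀ i j, Continuous (ψ i j) := fun i j => (hψ i j).continuous
  have cpdu : ∀ i : Fin n, Continuous (pd u i) := fun i => pd_cont (hu.of_le one_le_two) i
  have cpdv : ∀ j : Fin n, Continuous (pd v j) := fun j => pd_cont (hv.of_le one_le_two) j
  have cpd2u : ∀ i j : Fin n, Continuous (pd2 u i j) := fun i j => pd_cont (pd_contDiff hu i) j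
  have cpdf : ∀ i : Fin n, Continuous (pd f i) := fun i => pd_cont hf i
  have cexp : Continuous (fun x : EuclideanSpace ℝ (Fin n) => Real.exp (-f x)) :=
    (hf.continuous.neg).rexp
  have cbox : Continuous (boxOp ψ f u) := by
    unfold boxOp
    exact ((continuous_finset_sum _ fun i _ => continuous_finset_sum _ fun j _ =>
        (cψ i j).mul (cpd2u i j)).sub
      (continuous_finset_sum _ fun i _ => continuous_finset_sum _ fun j _ =>
        ((cψ i j).mul (cpdf i)).mul (cpdu j)))
  have I1 : Integrable (fun x => boxOp ψ f u x * v x * Real.exp (-f x)) := by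
    refine Continuous.integrable_of_hasCompactSupport
      ((cbox.mul hv.continuous).mul cexp) ?_
    refine hv'.mono' (Function.support_subset_iff'.2 fun x hx => ?_)
    simp [image_eq_zero_of_notMem_tsupport hx]
  have I2 : Integrable
      (fun x => (∑ i, ∑ j, ψ i j x * pd u i x * pd v j x) * Real.exp (-f x)) := by
    refine Continuous.integrable_of_hasCompactSupport
      (((continuous_finset_sum _ fun i _ => continuous_finset_sum _ fun j _ =>
        ((cψ i j).mul (cpdu i)).mul (cpdv j))).mul cexp) ?_
    refine hv'.mono' (Function.support_subset_iff'.2 fun x hx => ?_)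
    have hz : ∀ j : Fin n, pd v j x = 0 := by
      intro j
      simp [pd, fderiv_of_notMem_tsupport ℝ hx]
    simp [hz]
  have h1 : (∫ x, boxOp ψ f u x * v x * Real.exp (-f x)) +
      ∫ x, (∑ i, ∑ j, ψ i j x * pd u i x * pd v j x) * Real.exp (-f x) = 0 := by
    rw [← integral_add I1 I2, ← h0]
    exact integral_congr_ae (Filter.Eventually.of_forall fun x => (hpt x).symm)
  linarith

end Aux

/-- If `ψ` is a symmetric, divergence-free `C¹` tensor and `f` is `C¹`, then for all
compactly supported `C²` functions `u, v`,
`∫ (□_{ψ,f} u) v e^{-f} = -∫ ∑_{i,j} ψ_{ij} (∂_i u)(∂_j v) e^{-f}`;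
in particular `□_{ψ,f}` is self-adjoint with respect to `e^{-f} dx`. -/
theorem boxOp_self_adjoint (n : ℕ)
    (ψ : Fin n → Fin n → EuclideanSpace ℝ (Fin n) → ℝ)
    (hψ : ∀ i j, ContDiff ℝ 1 (ψ i j))
    (hsymm : ∀ i j x, ψ i j x = ψ j i x)
    (hdiv : ∀ i x, ∑ j, pd (ψ i j) j x = 0)
    (f : EuclideanSpace ℝ (Fin n) → ℝ) (hf : ContDiff ℝ 1 f)
    (u v : EuclideanSpace ℝ (Fin n) → ℝ)
    (hu : ContDiff ℝ 2 u) (hv : ContDiff ℝ 2 v)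
    (hu' : HasCompactSupport u) (hv' : HasCompactSupport v) :
    (∫ x, boxOp ψ f u x * v x * Real.exp (-f x)) =
        -∫ x, (∑ i, ∑ j, ψ i j x * pd u i x * pd v j x) * Real.exp (-f x) ∧
      (∫ x, boxOp ψ f u x * v x * Real.exp (-f x)) =
        ∫ x, u x * boxOp ψ f v x * Real.exp (-f x) := by
  have h1 := boxOp_ibp ψ hψ hsymm hdiv f hf u v hu hv hv'
  have h2 := boxOp_ibp ψ hψ hsymm hdiv f hf v u hv hu hu'
  refine ⟨h1, ?_⟩
  have hswap : ∀ x, (∑ i, ∑ j, ψ i j x * pd v i x * pd u j x)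
      = ∑ i, ∑ j, ψ i j x * pd u i x * pd v j x := by
    intro x
    rw [Finset.sum_comm]
    refine Finset.sum_congr rfl fun i _ => Finset.sum_congr rfl fun j _ => ?_
    rw [hsymm]; ring
  calc (∫ x, boxOp ψ f u x * v x * Real.exp (-f x))
      = -∫ x, (∑ i, ∑ j, ψ i j x * pd u i x * pd v j x) * Real.exp (-f x) := h1
    _ = -∫ x, (∑ i, ∑ j, ψ i j x * pd v i x * pd u j x) * Real.exp (-f x) := by
        congr 1
        exact integral_congr_ae (Filter.Eventually.of_forall fun x =>
          congrArg (· * Real.exp (-f x)) (hswap x).symm)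
    _ = ∫ x, boxOp ψ f v x * u x * Real.exp (-f x) := h2.symm
    _ = ∫ x, u x * boxOp ψ f v x * Real.exp (-f x) :=
        integral_congr_ae (Filter.Eventually.of_forall fun x => by ring)
end

section
/- Let E = EuclideanSpace ℝ (Fin n) and let U ⊆ E be open. Let ψ_{ij} : U → ℝ (i, j ∈ Fin n) be C¹ functions such that at every point of U the matrix (ψ_{ij}) is symmetric and positive semidefinite and Σ_j ∂_j ψ_{ij} = 0 for each i; let f : U → ℝ be C¹. For a C² function w define □_{ψ,f} w := Σ_{i,j} ψ_{ij} ∂²_{ij} w − Σ_{i,j} ψ_{ij} (∂_i f)(∂_j w). Let u : U → ℝ be a C² function with u > 0 on U, let c ∈ ℝ satisfy −□_{ψ,f} u(x) ≥ c · u(x) for all x ∈ U, and let v : U → ℝ be a nonnegative C² function whose support is a compact subset of U. Then −∫_U v · (□_{ψ,f} v) · e^{−f} dx ≥ c · ∫_U v² e^{−f} dx. -/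
open MeasureTheory

/-! ### Auxiliary lemmas -/

/-- The vector field whose divergence realizes the integrand in the basic identity. -/
noncomputable def Fdiv {n : ℕ} (ψ : Fin n → Fin n → EuclideanSpace ℝ (Fin n) → ℝ)
    (f a b : EuclideanSpace ℝ (Fin n) → ℝ) (j : Fin n) (x : EuclideanSpace ℝ (Fin n)) : ℝ :=
  (∑ i, ψ i j x * pd b i x) * (a x * Real.exp (-f x))

lemma my_int_pd_zero {n : ℕ} (F : EuclideanSpace ℝ (Fin n) → ℝ)
    (hF : ContDiff ℝ 1 F) (hsupp : HasCompactSupport F) (j : Fin n) :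
    ∫ x, pd F j x = 0 := by
  have hder : Continuous fun x => fderiv ℝ F x (EuclideanSpace.single j 1) :=
    (hF.continuous_fderiv one_ne_zero).clm_apply continuous_const
  have hsupp' : HasCompactSupport fun x => fderiv ℝ F x (EuclideanSpace.single j 1) :=
    (hsupp.fderiv ℝ).comp_left (g := fun L : _ →L[ℝ] ℝ => L (EuclideanSpace.single j 1)) rfl
  have h := integral_mul_fderiv_eq_neg_fderiv_mul_of_integrable (μ := volume)
    (f := F) (g := fun _ => (1:ℝ)) (v := EuclideanSpace.single j 1)
    ?_ ?_ ?_ (fun x _ => hF.differentiable one_ne_zero x) (fun x _ => differentiableAt_const (1:ℝ))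
  · simp only [fderiv_const, Pi.zero_apply, ContinuousLinearMap.zero_apply, mul_zero,
      integral_zero, mul_one] at h
    simpa [pd] using h.symm
  · simpa using hder.integrable_of_hasCompactSupport hsupp'
  · simp [fderiv_const]
  · simpa using (hF.continuous.integrable_of_hasCompactSupport hsupp)

lemma my_cont_glob {n : ℕ} {U K : Set (EuclideanSpace ℝ (Fin n))} (hU : IsOpen U)
    (hK : IsCompact K) (hKU : K ⊆ U) (A : EuclideanSpace ℝ (Fin n) → ℝ)
    (hA : ContinuousOn A U) (h0 : ∀ x ∉ K, A x = 0) :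
    Continuous A ∧ HasCompactSupport A := by
  have hsupp : Function.support A ⊆ K := fun x hx => by
    by_contra h; exact hx (h0 x h)
  constructor
  · rw [continuous_iff_continuousAt]
    intro x
    by_cases hx : x ∈ U
    · exact hA.continuousAt (hU.mem_nhds hx)
    · have hxK : x ∉ K := fun h => hx (hKU h)
      have : ∀ᶠ y in nhds x, A y = 0 := by
        filter_upwards [hK.isClosed.isOpen_compl.mem_nhds hxK] with y hy
        exact h0 y hy
      exact ContinuousAt.congr (continuousAt_const (y := (0:ℝ))) (by
        filter_upwards [this] with y hy; exact hy.symm)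
  · exact HasCompactSupport.of_support_subset_isCompact hK hsupp

lemma my_integrable {n : ℕ} {U K : Set (EuclideanSpace ℝ (Fin n))} (hU : IsOpen U)
    (hK : IsCompact K) (hKU : K ⊆ U) (A : EuclideanSpace ℝ (Fin n) → ℝ)
    (hA : ContinuousOn A U) (h0 : ∀ x ∉ K, A x = 0) :
    Integrable A volume := by
  obtain ⟨h1, h2⟩ := my_cont_glob hU hK hKU A hA h0
  exact h1.integrable_of_hasCompactSupport h2

/-- Derivative of a function vanishing outside a closed set, at an exterior point. -/
lemma my_pd_zero {n : ℕ} {K : Set (EuclideanSpace ℝ (Fin n))} (hK : IsClosed K)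
    (g : EuclideanSpace ℝ (Fin n) → ℝ) (h0 : ∀ y ∉ K, g y = 0) (i : Fin n)
    {x : EuclideanSpace ℝ (Fin n)} (hx : x ∉ K) : pd g i x = 0 := by
  have hev : g =ᶠ[nhds x] fun _ => (0:ℝ) := by
    filter_upwards [hK.isOpen_compl.mem_nhds hx] with y hy
    exact h0 y hy
  rw [pd, hev.fderiv_eq]
  simp

lemma my_contOn_pd {n : ℕ} {U : Set (EuclideanSpace ℝ (Fin n))} (hU : IsOpen U)
    (g : EuclideanSpace ℝ (Fin n) → ℝ) (hg : ContDiffOn ℝ 1 g U) (i : Fin n) :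
    ContinuousOn (pd g i) U :=
  ((hg.fderiv_of_isOpen (m := 0) hU (by norm_num)).clm_apply contDiffOn_const).continuousOn

lemma my_contDiffOn_pd {n : ℕ} {U : Set (EuclideanSpace ℝ (Fin n))} (hU : IsOpen U)
    (g : EuclideanSpace ℝ (Fin n) → ℝ) (hg : ContDiffOn ℝ 2 g U) (i : Fin n) :
    ContDiffOn ℝ 1 (pd g i) U :=
  (hg.fderiv_of_isOpen hU (by norm_num)).clm_apply contDiffOn_const

lemma my_contOn_pd2 {n : ℕ} {U : Set (EuclideanSpace ℝ (Fin n))} (hU : IsOpen U)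
    (g : EuclideanSpace ℝ (Fin n) → ℝ) (hg : ContDiffOn ℝ 2 g U) (i j : Fin n) :
    ContinuousOn (pd2 g i j) U := by
  have : ContDiffOn ℝ 1 (fun y => fderiv ℝ g y (EuclideanSpace.single i 1)) U :=
    (hg.fderiv_of_isOpen hU (by norm_num)).clm_apply contDiffOn_const
  exact ((this.fderiv_of_isOpen (m := 0) hU (by norm_num)).clm_apply contDiffOn_const).continuousOn

lemma my_contOn_box {n : ℕ} {U : Set (EuclideanSpace ℝ (Fin n))} (hU : IsOpen U)
    (ψ : Fin n → Fin n → EuclideanSpace ℝ (Fin n) → ℝ)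
    (hψ : ∀ i j, ContDiffOn ℝ 1 (ψ i j) U)
    (f : EuclideanSpace ℝ (Fin n) → ℝ) (hf : ContDiffOn ℝ 1 f U)
    (w : EuclideanSpace ℝ (Fin n) → ℝ) (hw : ContDiffOn ℝ 2 w U) :
    ContinuousOn (boxOp ψ f w) U := by
  apply ContinuousOn.sub
  · exact continuousOn_finset_sum _ fun i _ => continuousOn_finset_sum _ fun j _ =>
      ((hψ i j).continuousOn.mul (my_contOn_pd2 hU w hw i j))
  · exact continuousOn_finset_sum _ fun i _ => continuousOn_finset_sum _ fun j _ =>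
      (((hψ i j).continuousOn.mul (my_contOn_pd hU f hf i)).mul
        (my_contOn_pd hU w (hw.of_le one_le_two) j))

lemma sum_algebra {n : ℕ} (ψ p2 dψ : Fin n → Fin n → ℝ) (pa pb pf : Fin n → ℝ) (A Ex : ℝ)
    (hsym : ∀ i j, ψ i j = ψ j i) (hdiv : ∀ i, ∑ j, dψ i j = 0) :
    ∑ j, ((∑ i, ψ i j * pb i) * (A * (Ex * -(pf j)) + Ex * pa j)
      + (A * Ex) * (∑ i, (ψ i j * p2 i j + pb i * dψ i j)))
    = ((∑ i, ∑ j, ψ i j * pa i * pb j)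
        + A * ((∑ i, ∑ j, ψ i j * p2 i j) - ∑ i, ∑ j, ψ i j * pf i * pb j)) * Ex := by
  have step1 : ∑ j, ((∑ i, ψ i j * pb i) * (A * (Ex * -(pf j)) + Ex * pa j)
      + (A * Ex) * (∑ i, (ψ i j * p2 i j + pb i * dψ i j)))
      = ∑ j, ∑ i, (ψ i j * pb i * pa j * Ex + A * Ex * (ψ i j * p2 i j)
          + A * Ex * (pb i * dψ i j) - ψ i j * pb i * A * pf j * Ex) := by
    refine Finset.sum_congr rfl fun j _ => ?_
    rw [Finset.sum_mul, Finset.mul_sum, ← Finset.sum_add_distrib]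
    exact Finset.sum_congr rfl fun i _ => by ring
  have step2 : ∑ j, ∑ i : Fin n, (ψ i j * pb i * pa j * Ex + A * Ex * (ψ i j * p2 i j)
        + A * Ex * (pb i * dψ i j) - ψ i j * pb i * A * pf j * Ex)
      = (∑ j, ∑ i, ψ i j * pb i * pa j * Ex) + (∑ j, ∑ i, A * Ex * (ψ i j * p2 i j))
        + (∑ j, ∑ i, A * Ex * (pb i * dψ i j))
        - ∑ j, ∑ i, ψ i j * pb i * A * pf j * Ex := by
    simp only [Finset.sum_add_distrib, Finset.sum_sub_distrib]
  have e1 : ∑ j, ∑ i, ψ i j * pb i * pa j * Ex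
      = (∑ i, ∑ j, ψ i j * pa i * pb j) * Ex := by
    calc ∑ j, ∑ i, ψ i j * pb i * pa j * Ex
        = ∑ j, ∑ i, ψ j i * pa j * pb i * Ex :=
          Finset.sum_congr rfl fun j _ => Finset.sum_congr rfl fun i _ => by
            rw [hsym i j]; ring
      _ = (∑ j, ∑ i, ψ j i * pa j * pb i) * Ex := by
          rw [Finset.sum_mul]
          exact Finset.sum_congr rfl fun j _ => (Finset.sum_mul _ _ _).symm
  have e2 : ∑ j, ∑ i, A * Ex * (ψ i j * p2 i j)
      = A * (∑ i, ∑ j, ψ i j * p2 i j) * Ex := by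
    calc ∑ j, ∑ i, A * Ex * (ψ i j * p2 i j)
        = ∑ i, ∑ j, A * Ex * (ψ i j * p2 i j) := Finset.sum_comm
      _ = A * (∑ i, ∑ j, ψ i j * p2 i j) * Ex := by
          rw [Finset.mul_sum, Finset.sum_mul]
          refine Finset.sum_congr rfl fun i _ => ?_
          rw [Finset.mul_sum, Finset.sum_mul]
          exact Finset.sum_congr rfl fun j _ => by ring
  have e3 : ∑ j, ∑ i, A * Ex * (pb i * dψ i j) = (0:ℝ) := by
    rw [Finset.sum_comm]
    refine Finset.sum_eq_zero fun i _ => ?_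
    have : ∑ j, A * Ex * (pb i * dψ i j) = A * Ex * pb i * ∑ j, dψ i j := by
      rw [Finset.mul_sum]
      exact Finset.sum_congr rfl fun j _ => by ring
    rw [this, hdiv i, mul_zero]
  have e4 : ∑ j, ∑ i, ψ i j * pb i * A * pf j * Ex
      = A * (∑ i, ∑ j, ψ i j * pf i * pb j) * Ex := by
    calc ∑ j, ∑ i, ψ i j * pb i * A * pf j * Ex
        = ∑ j, ∑ i, A * Ex * (ψ j i * pf j * pb i) :=
          Finset.sum_congr rfl fun j _ => Finset.sum_congr rfl fun i _ => by
            rw [hsym i j]; ring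
      _ = A * (∑ j, ∑ i, ψ j i * pf j * pb i) * Ex := by
          rw [Finset.mul_sum, Finset.sum_mul]
          refine Finset.sum_congr rfl fun j _ => ?_
          rw [Finset.mul_sum, Finset.sum_mul]
          exact Finset.sum_congr rfl fun i _ => by ring
  rw [step1, step2, e1, e2, e3, e4]
  ring

lemma psd_algebra {n : ℕ} (ψ : Fin n → Fin n → ℝ) (pv pu : Fin n → ℝ) (s : ℝ)
    (hsym : ∀ i j, ψ i j = ψ j i)
    (hq : ∀ z : Fin n → ℝ, 0 ≤ ∑ i, z i * ∑ j, ψ i j * z j) :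
    ∑ i, ∑ j, ψ i j * (2*s*pv i - s^2*pu i) * pu j
      ≤ ∑ i, ∑ j, ψ i j * pv i * pv j := by
  have hswap : ∑ i, ∑ j, ψ i j * pu i * pv j = ∑ i, ∑ j, ψ i j * pv i * pu j := by
    calc ∑ i, ∑ j, ψ i j * pu i * pv j
        = ∑ i, ∑ j, ψ j i * pv j * pu i :=
          Finset.sum_congr rfl fun i _ => Finset.sum_congr rfl fun j _ => by
            rw [hsym i j]; ring
      _ = ∑ i, ∑ j, ψ i j * pv i * pu j := Finset.sum_comm
  have hexp : ∑ i, (pv i - s*pu i) * ∑ j, ψ i j * (pv j - s*pu j)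
      = (∑ i, ∑ j, ψ i j * pv i * pv j) - s * (∑ i, ∑ j, ψ i j * pv i * pu j)
        - s * (∑ i, ∑ j, ψ i j * pu i * pv j)
        + s^2 * ∑ i, ∑ j, ψ i j * pu i * pu j := by
    rw [Finset.mul_sum, Finset.mul_sum, Finset.mul_sum, ← Finset.sum_sub_distrib,
      ← Finset.sum_sub_distrib, ← Finset.sum_add_distrib]
    refine Finset.sum_congr rfl fun i _ => ?_
    rw [Finset.mul_sum, Finset.mul_sum, Finset.mul_sum, Finset.mul_sum,
      ← Finset.sum_sub_distrib, ← Finset.sum_sub_distrib, ← Finset.sum_add_distrib]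
    exact Finset.sum_congr rfl fun j _ => by ring
  have hlhs : ∑ i, ∑ j, ψ i j * (2*s*pv i - s^2*pu i) * pu j
      = 2*s*(∑ i, ∑ j, ψ i j * pv i * pu j) - s^2 * ∑ i, ∑ j, ψ i j * pu i * pu j := by
    rw [Finset.mul_sum, Finset.mul_sum, ← Finset.sum_sub_distrib]
    refine Finset.sum_congr rfl fun i _ => ?_
    rw [Finset.mul_sum, Finset.mul_sum, ← Finset.sum_sub_distrib]
    exact Finset.sum_congr rfl fun j _ => by ring
  have h := hq (fun i => pv i - s * pu i)
  rw [hexp, hswap] at h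
  rw [hlhs]
  linarith

section
variable {n : ℕ} {U : Set (EuclideanSpace ℝ (Fin n))}

lemma pd_Fdiv (hU : IsOpen U)
    (ψ : Fin n → Fin n → EuclideanSpace ℝ (Fin n) → ℝ)
    (hψ : ∀ i j, ContDiffOn ℝ 1 (ψ i j) U)
    (f a b : EuclideanSpace ℝ (Fin n) → ℝ)
    (hf : ContDiffOn ℝ 1 f U) (ha : ContDiffOn ℝ 1 a U) (hb : ContDiffOn ℝ 2 b U)
    (j : Fin n) {x : EuclideanSpace ℝ (Fin n)} (hx : x ∈ U) :
    pd (Fdiv ψ f a b j) j x =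
      (∑ i, ψ i j x * pd b i x) *
          (a x * (Real.exp (-f x) * -(pd f j x)) + Real.exp (-f x) * pd a j x)
        + (a x * Real.exp (-f x)) *
          (∑ i, (ψ i j x * pd2 b i j x + pd b i x * pd (ψ i j) j x)) := by
  have mem : U ∈ nhds x := hU.mem_nhds hx
  have hpdb : ∀ i : Fin n, ContDiffOn ℝ 1
      (fun y => fderiv ℝ b y (EuclideanSpace.single i 1)) U := fun i =>
    (hb.fderiv_of_isOpen hU (by norm_num)).clm_apply contDiffOn_const
  have dψ : ∀ i, HasFDerivAt (ψ i j) (fderiv ℝ (ψ i j) x) x :=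
    fun i => (((hψ i j).differentiableOn one_ne_zero).differentiableAt mem).hasFDerivAt
  have da : HasFDerivAt a (fderiv ℝ a x) x :=
    ((ha.differentiableOn one_ne_zero).differentiableAt mem).hasFDerivAt
  have dbi : ∀ i : Fin n, HasFDerivAt (fun y => fderiv ℝ b y (EuclideanSpace.single i 1))
      (fderiv ℝ (fun y => fderiv ℝ b y (EuclideanSpace.single i 1)) x) x :=
    fun i => (((hpdb i).differentiableOn one_ne_zero).differentiableAt mem).hasFDerivAt
  have df : HasFDerivAt f (fderiv ℝ f x) x :=
    ((hf.differentiableOn one_ne_zero).differentiableAt mem).hasFDerivAt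
  have de : HasFDerivAt (fun y => Real.exp (-f y))
      (Real.exp (-f x) • -fderiv ℝ f x) x := df.neg.exp
  have dae := da.fun_mul de
  have dS : HasFDerivAt (fun y => ∑ i, ψ i j y * fderiv ℝ b y (EuclideanSpace.single i 1))
      (∑ i, ((ψ i j x) • fderiv ℝ (fun y => fderiv ℝ b y (EuclideanSpace.single i 1)) x
        + (fderiv ℝ b x (EuclideanSpace.single i 1)) • fderiv ℝ (ψ i j) x)) x :=
    HasFDerivAt.fun_sum (fun i _ => (dψ i).fun_mul (dbi i))
  have dF := dS.fun_mul dae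
  have hpd : pd (Fdiv ψ f a b j) j x
      = fderiv ℝ (Fdiv ψ f a b j) x (EuclideanSpace.single j 1) := rfl
  rw [hpd]
  have hFeq : Fdiv ψ f a b j = fun y =>
      (∑ i, ψ i j y * fderiv ℝ b y (EuclideanSpace.single i 1)) * (a y * Real.exp (-f y)) := rfl
  rw [hFeq, dF.fderiv]
  simp only [ContinuousLinearMap.add_apply, ContinuousLinearMap.smul_apply,
    ContinuousLinearMap.sum_apply, ContinuousLinearMap.neg_apply, smul_eq_mul, pd, pd2]

lemma divergence_id (hU : IsOpen U)
    (ψ : Fin n → Fin n → EuclideanSpace ℝ (Fin n) → ℝ)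
    (hψ : ∀ i j, ContDiffOn ℝ 1 (ψ i j) U)
    (hsym : ∀ x ∈ U, ∀ i j, ψ i j x = ψ j i x)
    (hdiv : ∀ i, ∀ x ∈ U, ∑ j, pd (ψ i j) j x = 0)
    (f : EuclideanSpace ℝ (Fin n) → ℝ) (hf : ContDiffOn ℝ 1 f U)
    {K : Set (EuclideanSpace ℝ (Fin n))} (hK : IsCompact K) (hKU : K ⊆ U)
    (a b : EuclideanSpace ℝ (Fin n) → ℝ)
    (ha : ContDiffOn ℝ 1 a U) (hb : ContDiffOn ℝ 2 b U)
    (ha0 : ∀ x ∉ K, a x = 0) :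
    ∫ x in U, ((∑ i, ∑ j, ψ i j x * pd a i x * pd b j x)
      + a x * boxOp ψ f b x) * Real.exp (-f x) = 0 := by
  have hKc : ∀ (j : Fin n) (x), x ∉ K → Fdiv ψ f a b j x = 0 := by
    intro j x hx; simp [Fdiv, ha0 x hx]
  have hpdb : ∀ i : Fin n, ContDiffOn ℝ 1
      (fun y => fderiv ℝ b y (EuclideanSpace.single i 1)) U := fun i =>
    (hb.fderiv_of_isOpen hU (by norm_num)).clm_apply contDiffOn_const
  have hFU : ∀ j, ContDiffOn ℝ 1 (Fdiv ψ f a b j) U := by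
    intro j
    exact (ContDiffOn.sum fun i _ => (hψ i j).mul (hpdb i)).mul (ha.mul hf.neg.exp)
  have hFC1 : ∀ j, ContDiff ℝ 1 (Fdiv ψ f a b j) := by
    intro j
    rw [← contDiffOn_univ]
    intro x _
    by_cases hx : x ∈ U
    · exact ((hFU j x hx).contDiffAt (hU.mem_nhds hx)).contDiffWithinAt
    · have hxK : x ∉ K := fun h => hx (hKU h)
      have hev : Fdiv ψ f a b j =ᶠ[nhds x] fun _ => (0:ℝ) := by
        filter_upwards [hK.isClosed.isOpen_compl.mem_nhds hxK] with y hy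
        exact hKc j y hy
      exact ((contDiffAt_const (c := (0:ℝ))).congr_of_eventuallyEq hev).contDiffWithinAt
  have hFsupp : ∀ j, HasCompactSupport (Fdiv ψ f a b j) := fun j =>
    HasCompactSupport.of_support_subset_isCompact hK
      (fun x hx => by by_contra h; exact hx (hKc j x h))
  have hpd0 : ∀ (j : Fin n) (x), x ∉ K → pd (Fdiv ψ f a b j) j x = 0 := fun j x hx =>
    my_pd_zero hK.isClosed _ (hKc j) j hx
  have hI : ∀ j : Fin n, Integrable (fun x => pd (Fdiv ψ f a b j) j x) volume := by
    intro j
    have hc : Continuous fun x => pd (Fdiv ψ f a b j) j x :=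
      ((hFC1 j).continuous_fderiv one_ne_zero).clm_apply continuous_const
    refine hc.integrable_of_hasCompactSupport
      (HasCompactSupport.of_support_subset_isCompact hK fun x hx => ?_)
    by_contra h; exact hx (hpd0 j x h)
  have hkey : ∀ x ∈ U, ∑ j, pd (Fdiv ψ f a b j) j x
      = ((∑ i, ∑ j, ψ i j x * pd a i x * pd b j x)
          + a x * boxOp ψ f b x) * Real.exp (-f x) := by
    intro x hx
    calc ∑ j, pd (Fdiv ψ f a b j) j x
        = ∑ j, ((∑ i, ψ i j x * pd b i x) *
            (a x * (Real.exp (-f x) * -(pd f j x)) + Real.exp (-f x) * pd a j x)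
          + (a x * Real.exp (-f x)) *
            (∑ i, (ψ i j x * pd2 b i j x + pd b i x * pd (ψ i j) j x))) :=
          Finset.sum_congr rfl fun j _ => pd_Fdiv hU ψ hψ f a b hf ha hb j hx
      _ = ((∑ i, ∑ j, ψ i j x * pd a i x * pd b j x)
          + a x * boxOp ψ f b x) * Real.exp (-f x) := by
          rw [boxOp]
          exact sum_algebra (fun i j => ψ i j x) (fun i j => pd2 b i j x)
            (fun i j => pd (ψ i j) j x) (fun i => pd a i x) (fun i => pd b i x)
            (fun i => pd f i x) (a x) (Real.exp (-f x)) (hsym x hx)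
            (fun i => hdiv i x hx)
  calc ∫ x in U, ((∑ i, ∑ j, ψ i j x * pd a i x * pd b j x)
        + a x * boxOp ψ f b x) * Real.exp (-f x)
      = ∫ x in U, ∑ j, pd (Fdiv ψ f a b j) j x :=
        setIntegral_congr_fun hU.measurableSet (fun x hx => (hkey x hx).symm)
    _ = ∫ x, ∑ j, pd (Fdiv ψ f a b j) j x :=
        setIntegral_eq_integral_of_forall_compl_eq_zero (fun x hx =>
          Finset.sum_eq_zero fun j _ => hpd0 j x (fun h => hx (hKU h)))
    _ = ∑ j, ∫ x, pd (Fdiv ψ f a b j) j x := integral_finset_sum _ (fun j _ => hI j)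
    _ = 0 := Finset.sum_eq_zero fun j _ => my_int_pd_zero _ (hFC1 j) (hFsupp j) j

end

/-- Barta-type eigenvalue lower bound: if `ψ` is symmetric positive semidefinite
and divergence free on the open set `U`, `u > 0` is `C²` on `U` with
`-□_{ψ,f} u ≥ c u` on `U`, and `v ≥ 0` is `C²` with compact support contained
in `U`, then `-∫_U v (□_{ψ,f} v) e^{-f} ≥ c ∫_U v² e^{-f}`. -/
theorem boxOp_eigenvalue_lower_bound (n : ℕ)
    (U : Set (EuclideanSpace ℝ (Fin n))) (hU : IsOpen U)
    (ψ : Fin n → Fin n → EuclideanSpace ℝ (Fin n) → ℝ)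
    (hψ : ∀ i j, ContDiffOn ℝ 1 (ψ i j) U)
    (hpsd : ∀ x ∈ U, Matrix.PosSemidef (Matrix.of fun i j => ψ i j x))
    (hdiv : ∀ i, ∀ x ∈ U, ∑ j, pd (ψ i j) j x = 0)
    (f : EuclideanSpace ℝ (Fin n) → ℝ) (hf : ContDiffOn ℝ 1 f U)
    (u : EuclideanSpace ℝ (Fin n) → ℝ) (hu : ContDiffOn ℝ 2 u U)
    (hupos : ∀ x ∈ U, 0 < u x)
    (c : ℝ) (hc : ∀ x ∈ U, -boxOp ψ f u x ≥ c * u x)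
    (v : EuclideanSpace ℝ (Fin n) → ℝ) (hv : ContDiffOn ℝ 2 v U)
    (hvnn : ∀ x ∈ U, 0 ≤ v x)
    (hvsupp : HasCompactSupport v) (hvsub : tsupport v ⊆ U) :
    (-∫ x in U, v x * boxOp ψ f v x * Real.exp (-f x)) ≥
      c * ∫ x in U, v x ^ 2 * Real.exp (-f x) := by
  classical
  have hK : IsCompact (tsupport v) := hvsupp
  have hv0 : ∀ x ∉ tsupport v, v x = 0 := fun x hx => image_eq_zero_of_notMem_tsupport hx
  have hsym : ∀ x ∈ U, ∀ i j, ψ i j x = ψ j i x := by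
    intro x hx i j
    have h := congrFun (congrFun (hpsd x hx).1 i) j
    simpa [Matrix.conjTranspose_apply, Matrix.of_apply] using h.symm
  have hq : ∀ x ∈ U, ∀ z : Fin n → ℝ, 0 ≤ ∑ i, z i * ∑ j, ψ i j x * z j := by
    intro x hx z
    have h := (hpsd x hx).dotProduct_mulVec_nonneg z
    simpa [dotProduct, Matrix.mulVec, Matrix.of_apply] using h
  set A : EuclideanSpace ℝ (Fin n) → ℝ := fun x => v x ^ 2 / u x with hAdef
  have ha : ContDiffOn ℝ 1 A U :=
    ((hv.of_le one_le_two).pow 2).div (hu.of_le one_le_two) fun x hx => (hupos x hx).ne'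
  have ha0 : ∀ x ∉ tsupport v, A x = 0 := fun x hx => by
    simp [hAdef, hv0 x hx]
  have hAnn : ∀ x ∈ U, 0 ≤ A x := fun x hx =>
    div_nonneg (sq_nonneg _) (hupos x hx).le
  have hcontE : ContinuousOn (fun x => Real.exp (-f x)) U :=
    Real.continuous_exp.comp_continuousOn hf.continuousOn.neg
  -- integrability of the five integrands
  have hg1 : Integrable (fun x =>
      (∑ i, ∑ j, ψ i j x * pd v i x * pd v j x) * Real.exp (-f x)) volume := by
    refine my_integrable hU hK hvsub _ ?_ ?_
    · exact (continuousOn_finset_sum _ fun i _ => continuousOn_finset_sum _ fun j _ =>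
        ((hψ i j).continuousOn.mul (my_contOn_pd hU v (hv.of_le one_le_two) i)).mul
          (my_contOn_pd hU v (hv.of_le one_le_two) j)).mul hcontE
    · intro x hx
      have : ∀ i : Fin n, pd v i x = 0 := fun i =>
        my_pd_zero (isClosed_tsupport v) v hv0 i hx
      simp [this]
  have hg2 : Integrable (fun x => v x * boxOp ψ f v x * Real.exp (-f x)) volume := by
    refine my_integrable hU hK hvsub _ ?_ ?_
    · exact ((hv.of_le one_le_two).continuousOn.mul
        (my_contOn_box hU ψ hψ f hf v hv)).mul hcontE
    · intro x hx; simp [hv0 x hx]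
  have hg3 : Integrable (fun x =>
      (∑ i, ∑ j, ψ i j x * pd A i x * pd u j x) * Real.exp (-f x)) volume := by
    refine my_integrable hU hK hvsub _ ?_ ?_
    · exact (continuousOn_finset_sum _ fun i _ => continuousOn_finset_sum _ fun j _ =>
        ((hψ i j).continuousOn.mul (my_contOn_pd hU A ha i)).mul
          (my_contOn_pd hU u (hu.of_le one_le_two) j)).mul hcontE
    · intro x hx
      have : ∀ i : Fin n, pd A i x = 0 := fun i =>
        my_pd_zero (isClosed_tsupport v) A ha0 i hx
      simp [this]
  have hg4 : Integrable (fun x => A x * boxOp ψ f u x * Real.exp (-f x)) volume := by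
    refine my_integrable hU hK hvsub _ ?_ ?_
    · exact (ha.continuousOn.mul (my_contOn_box hU ψ hψ f hf u hu)).mul hcontE
    · intro x hx; simp [ha0 x hx]
  have hg5 : Integrable (fun x => v x ^ 2 * Real.exp (-f x)) volume := by
    refine my_integrable hU hK hvsub _ ?_ ?_
    · exact (((hv.of_le one_le_two).pow 2).continuousOn).mul hcontE
    · intro x hx; simp [hv0 x hx]
  -- the two divergence identities
  have hid1 := divergence_id hU ψ hψ hsym hdiv f hf hK hvsub v v
    (hv.of_le one_le_two) hv hv0
  have hid2 := divergence_id hU ψ hψ hsym hdiv f hf hK hvsub A u ha hu ha0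
  simp only [add_mul] at hid1 hid2
  rw [integral_add hg1.restrict hg2.restrict] at hid1
  rw [integral_add hg3.restrict hg4.restrict] at hid2
  -- pointwise derivative of A on U
  have hpda : ∀ x ∈ U, ∀ i : Fin n, pd A i x
      = 2 * (v x / u x) * pd v i x - (v x / u x) ^ 2 * pd u i x := by
    intro x hx i
    have mem : U ∈ nhds x := hU.mem_nhds hx
    have dv : HasFDerivAt v (fderiv ℝ v x) x :=
      (((hv.of_le one_le_two).differentiableOn one_ne_zero).differentiableAt mem).hasFDerivAt
    have du : HasFDerivAt u (fderiv ℝ u x) x :=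
      (((hu.of_le one_le_two).differentiableOn one_ne_zero).differentiableAt mem).hasFDerivAt
    have dA : HasFDerivAt A (fderiv ℝ A x) x :=
      ((ha.differentiableOn one_ne_zero).differentiableAt mem).hasFDerivAt
    have hmul : HasFDerivAt (fun y => A y * u y)
        (A x • fderiv ℝ u x + u x • fderiv ℝ A x) x := dA.mul du
    have hvv : HasFDerivAt (fun y => v y * v y)
        (v x • fderiv ℝ v x + v x • fderiv ℝ v x) x := dv.mul dv
    have hEq : (fun y => A y * u y) =ᶠ[nhds x] fun y => v y * v y := by
      filter_upwards [mem] with y hy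
      have hy0 : u y ≠ 0 := (hupos y hy).ne'
      simp only [hAdef]
      field_simp
    have h2 : HasFDerivAt (fun y => A y * u y)
        (v x • fderiv ℝ v x + v x • fderiv ℝ v x) x := hvv.congr_of_eventuallyEq hEq
    have h3 := hmul.unique h2
    have h4 := congrArg (fun L : _ →L[ℝ] ℝ => L (EuclideanSpace.single i 1)) h3
    simp only [ContinuousLinearMap.add_apply, ContinuousLinearMap.smul_apply,
      smul_eq_mul] at h4
    have hu0 : u x ≠ 0 := (hupos x hx).ne'
    have hA : A x = v x ^ 2 / u x := rfl
    rw [pd, pd, pd]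
    have h5 : (fderiv ℝ A x) (EuclideanSpace.single i 1)
        = (2 * v x * (fderiv ℝ v x) (EuclideanSpace.single i 1)
            - A x * (fderiv ℝ u x) (EuclideanSpace.single i 1)) / u x := by
      rw [eq_div_iff hu0]; linarith [h4]
    rw [h5, hA]
    field_simp
  -- pointwise comparison of the two quadratic forms
  have hpt1 : ∀ x ∈ U,
      (∑ i, ∑ j, ψ i j x * pd A i x * pd u j x) * Real.exp (-f x)
        ≤ (∑ i, ∑ j, ψ i j x * pd v i x * pd v j x) * Real.exp (-f x) := by
    intro x hx
    refine mul_le_mul_of_nonneg_right ?_ (Real.exp_pos _).le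
    have hrw : ∑ i, ∑ j, ψ i j x * pd A i x * pd u j x
        = ∑ i, ∑ j, ψ i j x * (2 * (v x / u x) * pd v i x
            - (v x / u x) ^ 2 * pd u i x) * pd u j x :=
      Finset.sum_congr rfl fun i _ => Finset.sum_congr rfl fun j _ => by
        rw [hpda x hx i]
    rw [hrw]
    exact psd_algebra (fun i j => ψ i j x) (fun i => pd v i x) (fun i => pd u i x)
      (v x / u x) (hsym x hx) (hq x hx)
  have hmono1 : (∫ x in U, (∑ i, ∑ j, ψ i j x * pd A i x * pd u j x) * Real.exp (-f x))
      ≤ ∫ x in U, (∑ i, ∑ j, ψ i j x * pd v i x * pd v j x) * Real.exp (-f x) :=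
    setIntegral_mono_on hg3.integrableOn hg1.integrableOn hU.measurableSet hpt1
  -- pointwise lower bound for the A-term
  have hpt2 : ∀ x ∈ U, c * (v x ^ 2 * Real.exp (-f x))
      ≤ -(A x * boxOp ψ f u x * Real.exp (-f x)) := by
    intro x hx
    have hu0 : u x ≠ 0 := (hupos x hx).ne'
    have h1 : A x * (c * u x) ≤ A x * (-boxOp ψ f u x) :=
      mul_le_mul_of_nonneg_left (hc x hx) (hAnn x hx)
    have h2 : A x * (c * u x) = c * v x ^ 2 := by
      simp only [hAdef]
      field_simp
    have h3 : c * v x ^ 2 ≤ A x * (-boxOp ψ f u x) := h2 ▸ h1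
    have hE : 0 < Real.exp (-f x) := Real.exp_pos _
    calc c * (v x ^ 2 * Real.exp (-f x)) = (c * v x ^ 2) * Real.exp (-f x) := by ring
      _ ≤ (A x * (-boxOp ψ f u x)) * Real.exp (-f x) :=
          mul_le_mul_of_nonneg_right h3 hE.le
      _ = -(A x * boxOp ψ f u x * Real.exp (-f x)) := by ring
  have hmono2 : (∫ x in U, c * (v x ^ 2 * Real.exp (-f x)))
      ≤ ∫ x in U, -(A x * boxOp ψ f u x * Real.exp (-f x)) :=
    setIntegral_mono_on ((hg5.const_mul c).integrableOn) hg4.neg.integrableOn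
      hU.measurableSet hpt2
  rw [integral_const_mul] at hmono2
  rw [integral_neg] at hmono2
  rw [ge_iff_le]
  linarith [hmono1, hmono2, hid1, hid2]
end

section
/- Let (X, d) be a metric space with a Borel measure μ, let x₀ ∈ X, and suppose there exist constants C > 0 and n ≥ 1 such that μ(B(x₀, r)) ≤ C(1 + r)^n for every r > 0 (polynomial volume growth). Let f : X → ℝ be a measurable function satisfying f(x) ≥ (1/4)·(max(d(x, x₀) − 5n, 0))² for all x ∈ X. Then for every measurable function u : X → ℝ for which there exist constants A > 0 and 0 ≤ α < 1/4 with |u(x)| ≤ A·e^{α d(x,x₀)²} for all x, the function x ↦ |u(x)| e^{−f(x)} is integrable with respect to μ; in particular ∫_X e^{−f} dμ < ∞. -/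
open MeasureTheory

/-- On a metric measure space with polynomial volume growth
`μ(B(x₀,r)) ≤ C (1+r)^n`, if `f(x) ≥ (1/4) (d(x,x₀) - 5n)₊²`, then every measurable
`u` with `|u(x)| ≤ A e^{α d(x,x₀)²}` for some `0 ≤ α < 1/4` has
`|u| e^{-f}` integrable; in particular `∫ e^{-f} dμ < ∞`. -/
theorem integrable_of_gaussian_weight {X : Type*} [MetricSpace X]
    [MeasurableSpace X] [BorelSpace X] (μ : Measure X) (x₀ : X)
    (C : ℝ) (hC : 0 < C) (n : ℕ) (hn : 1 ≤ n)
    (hvol : ∀ r : ℝ, 0 < r → μ (Metric.ball x₀ r) ≤ ENNReal.ofReal (C * (1 + r) ^ n))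
    (f : X → ℝ) (hf : Measurable f)
    (hlb : ∀ x, f x ≥ (1 / 4) * max (dist x x₀ - 5 * n) 0 ^ 2) :
    (∀ u : X → ℝ, Measurable u →
        (∃ A α : ℝ, 0 < A ∧ 0 ≤ α ∧ α < 1 / 4 ∧
          ∀ x, |u x| ≤ A * Real.exp (α * dist x x₀ ^ 2)) →
        Integrable (fun x => |u x| * Real.exp (-f x)) μ) ∧
      Integrable (fun x => Real.exp (-f x)) μ := by
  have main : ∀ u : X → ℝ, Measurable u →
      (∃ A α : ℝ, 0 < A ∧ 0 ≤ α ∧ α < 1 / 4 ∧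
        ∀ x, |u x| ≤ A * Real.exp (α * dist x x₀ ^ 2)) →
      Integrable (fun x => |u x| * Real.exp (-f x)) μ := by
    intro u hu ⟨A, α, hA, hα0, hα4, hub⟩
    -- constants
    set δ : ℝ := 1 / 4 - α with hδdef
    have hδ : 0 < δ := by simp only [hδdef]; linarith
    set B : ℝ := 2 * α + 5 * (n : ℝ) / 2 + 1 with hBdef
    set c : ℝ := α + B ^ 2 / (4 * δ) with hcdef
    have hn1 : (1 : ℝ) ≤ (n : ℝ) := by exact_mod_cast hn
    -- key pointwise-in-k inequality
    have keyk : ∀ k : ℕ,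
        α * ((k : ℝ) + 1) ^ 2 - (1 / 4) * max ((k : ℝ) - 5 * n) 0 ^ 2 ≤ c - k := by
      intro k
      set K : ℝ := (k : ℝ) with hK
      have hK0 : 0 ≤ K := Nat.cast_nonneg k
      have hmax : K ^ 2 - 10 * n * K ≤ max (K - 5 * n) 0 ^ 2 := by
        rcases le_or_gt (K - 5 * n) 0 with h | h
        · rw [max_eq_right h]; nlinarith
        · rw [max_eq_left h.le]; nlinarith
      have hkey : B * K - δ * K ^ 2 ≤ B ^ 2 / (4 * δ) := by
        rw [le_div_iff₀ (by linarith : (0:ℝ) < 4 * δ)]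
        nlinarith [sq_nonneg (2 * δ * K - B)]
      nlinarith [hmax, hkey]
    -- annuli
    set s : ℕ → Set X := fun k => Metric.ball x₀ ((k : ℝ) + 1) \ Metric.ball x₀ (k : ℝ) with hs
    have hsm : ∀ k, MeasurableSet (s k) :=
      fun k => Metric.isOpen_ball.measurableSet.diff Metric.isOpen_ball.measurableSet
    have hdisj : Pairwise (Function.onFun Disjoint s) := by
      have key : ∀ i j : ℕ, i < j → Disjoint (s i) (s j) := by
        intro i j hij
        rw [Set.disjoint_left]
        intro x hxi hxj
        have h1 : dist x x₀ < (i : ℝ) + 1 := by simpa [hs] using hxi.1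
        have h2 : ¬ dist x x₀ < (j : ℝ) := by simpa [hs] using hxj.2
        have : (i : ℝ) + 1 ≤ (j : ℝ) := by exact_mod_cast Nat.succ_le_of_lt hij
        exact h2 (lt_of_lt_of_le h1 this)
      intro i j hij
      rcases hij.lt_or_gt with h | h
      · exact key i j h
      · exact (key j i h).symm
    have hU : (⋃ k, s k) = Set.univ := by
      ext x
      simp only [Set.mem_iUnion, Set.mem_univ, iff_true]
      refine ⟨⌊dist x x₀⌋₊, Metric.mem_ball.2 (Nat.lt_floor_add_one _), ?_⟩
      simp only [Metric.mem_ball, not_lt]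
      exact Nat.floor_le dist_nonneg
    -- bound per annulus
    set b : ℕ → ℝ := fun k =>
      A * Real.exp (α * ((k : ℝ) + 1) ^ 2 - (1 / 4) * max ((k : ℝ) - 5 * n) 0 ^ 2) with hb
    set h : ℕ → ℝ := fun k =>
      A * C * Real.exp c * ((k : ℝ) + 2) ^ n * Real.exp (-(k : ℝ)) with hh
    have hpt : ∀ k : ℕ, ∀ x ∈ s k,
        ENNReal.ofReal (|u x| * Real.exp (-f x)) ≤ ENNReal.ofReal (b k) := by
      intro k x hx
      apply ENNReal.ofReal_le_ofReal
      have hd1 : dist x x₀ < (k : ℝ) + 1 := by simpa [hs] using hx.1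
      have hd0 : (k : ℝ) ≤ dist x x₀ := by
        have := hx.2; simp only [hs, Metric.mem_ball, not_lt] at this; exact this
      have hsq : dist x x₀ ^ 2 ≤ ((k : ℝ) + 1) ^ 2 :=
        pow_le_pow_left₀ dist_nonneg hd1.le 2
      have hm : max ((k : ℝ) - 5 * n) 0 ^ 2 ≤ max (dist x x₀ - 5 * n) 0 ^ 2 :=
        pow_le_pow_left₀ (le_max_right _ _)
          (max_le_max (by linarith) le_rfl) 2
      have hfx : -f x ≤ -((1 / 4) * max ((k : ℝ) - 5 * n) 0 ^ 2) := by
        have := hlb x; nlinarith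
      calc |u x| * Real.exp (-f x)
          ≤ (A * Real.exp (α * dist x x₀ ^ 2)) * Real.exp (-f x) :=
            mul_le_mul_of_nonneg_right (hub x) (Real.exp_pos _).le
        _ = A * Real.exp (α * dist x x₀ ^ 2 + -f x) := by rw [Real.exp_add]; ring
        _ ≤ b k := by
            apply mul_le_mul_of_nonneg_left _ hA.le
            apply Real.exp_le_exp.2
            have : α * dist x x₀ ^ 2 ≤ α * ((k : ℝ) + 1) ^ 2 :=
              mul_le_mul_of_nonneg_left hsq hα0
            linarith
    have hkb : ∀ k : ℕ,
        ∫⁻ x in s k, ENNReal.ofReal (|u x| * Real.exp (-f x)) ∂μ ≤ ENNReal.ofReal (h k) := by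
      intro k
      have hμk : μ (s k) ≤ ENNReal.ofReal (C * ((k : ℝ) + 2) ^ n) := by
        have h1 : μ (s k) ≤ μ (Metric.ball x₀ ((k : ℝ) + 1)) :=
          measure_mono Set.diff_subset
        have h2 := hvol ((k : ℝ) + 1) (by positivity)
        have h3 : (1 : ℝ) + ((k : ℝ) + 1) = (k : ℝ) + 2 := by ring
        rw [h3] at h2
        exact h1.trans h2
      have hbk0 : 0 ≤ b k := by positivity
      calc ∫⁻ x in s k, ENNReal.ofReal (|u x| * Real.exp (-f x)) ∂μ
          ≤ ∫⁻ _ in s k, ENNReal.ofReal (b k) ∂μ :=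
            setLIntegral_mono measurable_const (hpt k)
        _ = ENNReal.ofReal (b k) * μ (s k) := setLIntegral_const _ _
        _ ≤ ENNReal.ofReal (b k) * ENNReal.ofReal (C * ((k : ℝ) + 2) ^ n) :=
            mul_le_mul_right hμk _
        _ = ENNReal.ofReal (b k * (C * ((k : ℝ) + 2) ^ n)) :=
            (ENNReal.ofReal_mul hbk0).symm
        _ ≤ ENNReal.ofReal (h k) := by
            apply ENNReal.ofReal_le_ofReal
            have h1 : Real.exp (α * ((k : ℝ) + 1) ^ 2 - (1 / 4) * max ((k : ℝ) - 5 * n) 0 ^ 2)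
                ≤ Real.exp c * Real.exp (-(k : ℝ)) := by
              rw [← Real.exp_add]
              exact Real.exp_le_exp.2 (by linarith [keyk k])
            have e1 : b k * (C * ((k : ℝ) + 2) ^ n)
                = (A * (C * ((k : ℝ) + 2) ^ n)) *
                  Real.exp (α * ((k : ℝ) + 1) ^ 2 - (1 / 4) * max ((k : ℝ) - 5 * n) 0 ^ 2) := by
              simp only [hb]; ring
            have e2 : h k = (A * (C * ((k : ℝ) + 2) ^ n)) * (Real.exp c * Real.exp (-(k : ℝ))) := by
              simp only [hh]; ring
            rw [e1, e2]
            exact mul_le_mul_of_nonneg_left h1 (by positivity)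
    -- summability
    have hsum : Summable h := by
      have hr : ‖Real.exp (-1 : ℝ)‖ < 1 := by
        rw [Real.norm_eq_abs, abs_of_pos (Real.exp_pos _)]
        exact Real.exp_lt_one_iff.2 (by norm_num)
      have S0 : Summable (fun k : ℕ => (k : ℝ) ^ n * Real.exp (-1 : ℝ) ^ k) :=
        summable_pow_mul_geometric_of_norm_lt_one n hr
      have S1 : Summable (fun k : ℕ => ((k : ℝ) + 2) ^ n * Real.exp (-1 : ℝ) ^ (k + 2)) := by
        have := (summable_nat_add_iff 2).2 S0
        refine this.congr fun k => ?_
        push_cast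
        ring
      have S2 : Summable (fun k : ℕ => ((k : ℝ) + 2) ^ n * Real.exp (-1 : ℝ) ^ k) := by
        have := S1.mul_left ((Real.exp (-1 : ℝ)) ^ 2)⁻¹
        refine this.congr fun k => ?_
        have hne : Real.exp (-1 : ℝ) ≠ 0 := (Real.exp_pos _).ne'
        field_simp
        ring
      have := S2.mul_left (A * C * Real.exp c)
      refine this.congr fun k => ?_
      have he : Real.exp (-1 : ℝ) ^ k = Real.exp (-(k : ℝ)) := by
        rw [← Real.exp_nat_mul]; norm_num
      simp only [hh]
      rw [he]; ring
    have hsumpos : ∀ k, 0 ≤ h k := fun k => by positivity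
    -- conclude
    refine ⟨(hu.abs.mul (hf.neg.exp)).aestronglyMeasurable, ?_⟩
    rw [hasFiniteIntegral_iff_ofReal
      (Filter.Eventually.of_forall fun x => by positivity)]
    calc ∫⁻ x, ENNReal.ofReal (|u x| * Real.exp (-f x)) ∂μ
        = ∫⁻ x in ⋃ k, s k, ENNReal.ofReal (|u x| * Real.exp (-f x)) ∂μ := by
          rw [hU, setLIntegral_univ]
      _ = ∑' k, ∫⁻ x in s k, ENNReal.ofReal (|u x| * Real.exp (-f x)) ∂μ :=
          lintegral_iUnion hsm hdisj _
      _ ≤ ∑' k, ENNReal.ofReal (h k) := ENNReal.tsum_le_tsum hkb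
      _ = ENNReal.ofReal (∑' k, h k) := (ENNReal.ofReal_tsum_of_nonneg hsumpos hsum).symm
      _ < ⊤ := ENNReal.ofReal_lt_top
  refine ⟨main, ?_⟩
  have h1 := main (fun _ => 1) measurable_const
    ⟨1, 0, one_pos, le_rfl, by norm_num, fun x => by simp⟩
  simpa using h1
end
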